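/- arXiv:math/0310296 — 7 statements merged into one kernel-verified Lean document; each statement's English description precedes it below -/
import Mathlib

section
/- Let G be an infinite, finitely generated group, and let f = \sum_g a_g g be a formal sum with complex coefficients such that \sum_g |a_g|^p < \infty for some natural number p. If for every g in a finite generating set S of G (closed under inverses) the set {x \in G : a_x \neq a_{gx}} is finite, then a_x = 0 for all but finitely many x (i.e. f has finite support). -/
/-- If `G` is an infinite, finitely generated group with finite symmetric generating set `S`,
and `a : G → ℂ` has `∑ |a x|^p < ∞` for some `p ≥ 1`, and for every `g ∈ S` the set
`{x | a x ≠ a (g * x)}` is finite, then `a` has finite support. -/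
theorem stmt0 {G : Type*} [Group G] [Infinite G]
    (S : Finset G) (hgen : Subgroup.closure (S : Set G) = ⊤)
    (hsymm : ∀ s ∈ S, s⁻¹ ∈ S)
    (p : ℕ) (hp : 1 ≤ p)
    (a : G → ℂ) (hsum : Summable fun x => ‖a x‖ ^ (p : ℝ))
    (hfin : ∀ g ∈ S, {x : G | a x ≠ a (g * x)}.Finite) :
    (Function.support a).Finite := by
  classical
  -- the bad set
  set F : Set G := ⋃ s ∈ S, {x : G | a x ≠ a (s * x)} with hFdef
  have hF : F.Finite := Set.Finite.biUnion S.finite_toSet hfin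
  have hFmem : ∀ {u : G}, u ∉ F → ∀ s ∈ S, a (s * u) = a u := by
    intro u hu s hs
    by_contra h
    exact hu (Set.mem_biUnion hs (fun h' => h (h'.symm)))
  -- step relation of Cayley graph
  set T : G → G → Prop := fun u v => ∃ s ∈ S, v = s * u with hTdef
  have hTsymm : Symmetric T := by
    rintro u v ⟨s, hs, rfl⟩
    exact ⟨s⁻¹, hsymm s hs, by group⟩
  -- restricted relation (complement of F)
  set Rel : G → G → Prop := fun u v => u ∉ F ∧ v ∉ F ∧ T u v with hReldef
  have hRelsymm : Symmetric Rel := by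
    rintro u v ⟨hu, hv, ht⟩
    exact ⟨hv, hu, hTsymm ht⟩
  -- connectivity of the Cayley graph
  have hconn : ∀ x : G, Relation.ReflTransGen T 1 x := by
    intro x
    have hx : x ∈ Subgroup.closure (S : Set G) := hgen ▸ Subgroup.mem_top x
    have lift : ∀ (y : G) {u v : G}, Relation.ReflTransGen T u v →
        Relation.ReflTransGen T (u * y) (v * y) := by
      intro y u v h
      refine Relation.ReflTransGen.lift (fun z => z * y) ?_ u v h
      rintro b c ⟨s, hs, rfl⟩
      exact ⟨s, hs, by group⟩
    refine Subgroup.closure_induction ?_ ?_ ?_ ?_ hx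
    · intro s hs
      exact Relation.ReflTransGen.single ⟨s, hs, (mul_one s).symm⟩
    · exact Relation.ReflTransGen.refl
    · intro u v _ _ hu hv
      have := lift v hu
      rw [one_mul] at this
      exact hv.trans this
    · intro u _ hu
      have := lift u⁻¹ hu
      rw [one_mul, mul_inv_cancel] at this
      exact ((@Relation.ReflTransGen.stdSymm _ _ ⟨fun _ _ h => hTsymm h⟩).symm _ _) this
  -- a is constant on Rel-components
  have hconst : ∀ {v y : G}, Relation.ReflTransGen Rel v y → a y = a v := by
    intro v y h
    induction h with
    | refl => rfl
    | tail _ h2 ih =>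
      obtain ⟨hu, hw, s, hs, rfl⟩ := h2
      rw [hFmem hu s hs, ih]
  -- members of components avoid F
  have hnotF : ∀ {v y : G}, v ∉ F → Relation.ReflTransGen Rel v y → y ∉ F := by
    intro v y hv h
    cases h with
    | refl => exact hv
    | tail _ h2 => exact h2.2.1
  -- components containing a support point are finite
  have hcompFin : ∀ v x₀ : G, Relation.ReflTransGen Rel v x₀ → a x₀ ≠ 0 →
      {y : G | Relation.ReflTransGen Rel v y}.Finite := by
    intro v x₀ hvx hx₀
    have hav : a v ≠ 0 := by rw [← hconst hvx]; exact hx₀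
    have hc : (0 : ℝ) < ‖a v‖ ^ (p : ℝ) :=
      Real.rpow_pos_of_pos (norm_pos_iff.mpr hav) _
    have hev : ∀ᶠ y in Filter.cofinite, ‖a y‖ ^ (p : ℝ) < ‖a v‖ ^ (p : ℝ) :=
      hsum.tendsto_cofinite_zero.eventually (gt_mem_nhds hc)
    have hfin' : {y : G | ¬ ‖a y‖ ^ (p : ℝ) < ‖a v‖ ^ (p : ℝ)}.Finite :=
      Filter.eventually_cofinite.mp hev
    refine hfin'.subset ?_
    intro y hy
    have : a y = a v := hconst hy
    simp [this]
  -- neighbors of F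
  set W : Set G := {w : G | ∃ s ∈ S, s * w ∈ F} with hWdef
  have hW : W.Finite := by
    have : W ⊆ ⋃ s ∈ S, (fun x => s⁻¹ * x) '' F := by
      rintro w ⟨s, hs, hsw⟩
      exact Set.mem_biUnion hs ⟨s * w, hsw, by group⟩
    exact ((Set.Finite.biUnion S.finite_toSet (fun s _ => hF.image _)).subset this)
  -- exit lemma
  have hexit : ∀ {x z : G}, x ∉ F → Relation.ReflTransGen T x z →
      Relation.ReflTransGen Rel x z ∨ ∃ w, Relation.ReflTransGen Rel x w ∧ w ∈ W := by
    intro x z hx h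
    induction h with
    | refl => exact Or.inl Relation.ReflTransGen.refl
    | @tail u z' h1 h2 ih =>
      rcases ih with hRxu | hdone
      · obtain ⟨s, hs, rfl⟩ := h2
        have hu : u ∉ F := hnotF hx hRxu
        by_cases hz : s * u ∈ F
        · exact Or.inr ⟨u, hRxu, s, hs, hz⟩
        · exact Or.inl (hRxu.tail ⟨hu, hz, s, hs, rfl⟩)
      · exact Or.inr hdone
  -- main inclusion
  have hsubset : Function.support a ⊆ F ∪ ⋃ w ∈ W,
      {y : G | Relation.ReflTransGen Rel w y ∧ a y ≠ 0} := by
    intro x hx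
    by_cases hxF : x ∈ F
    · exact Or.inl hxF
    right
    have hcf : ({y : G | Relation.ReflTransGen Rel x y} ∪ F).Finite :=
      (hcompFin x x Relation.ReflTransGen.refl hx).union hF
    obtain ⟨z, hz⟩ := hcf.infinite_compl.nonempty
    have hz1 : ¬ Relation.ReflTransGen Rel x z := fun h => hz (Or.inl h)
    have hpath : Relation.ReflTransGen T x z :=
      (((@Relation.ReflTransGen.stdSymm _ _ ⟨fun _ _ h => hTsymm h⟩).symm _ _) (hconn x)).trans (hconn z)
    rcases hexit hxF hpath with h | ⟨w, hRxw, hwW⟩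
    · exact absurd h hz1
    · exact Set.mem_biUnion hwW ⟨((@Relation.ReflTransGen.stdSymm _ _ ⟨fun _ _ h => hRelsymm h⟩).symm _ _) hRxw, hx⟩
  refine ((hF.union (Set.Finite.biUnion hW ?_)).subset hsubset)
  intro w _
  by_cases hne : ∃ x₀, Relation.ReflTransGen Rel w x₀ ∧ a x₀ ≠ 0
  · obtain ⟨x₀, h1, h2⟩ := hne
    exact (hcompFin w x₀ h1 h2).subset (fun y hy => hy.1)
  · have : {y : G | Relation.ReflTransGen Rel w y ∧ a y ≠ 0} = ∅ := by
      ext y; simp only [Set.mem_setOf_eq, Set.mem_empty_iff_false, iff_false]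
      intro h; exact hne ⟨y, h⟩
    rw [this]; exact Set.finite_empty
end

section
/- Let G be an infinite, finitely generated group and M a Banach space that is a left \mathbb{C}G-module on which each element of G acts as a continuous linear transformation, with \mathbb{C}G \subseteq M \subseteq L^p(G) for some natural number p. Then the G-module inclusion of \mathbb{C}G into M induces an injective homomorphism from H^1(G, \mathbb{C}G) into H^1(G, M). -/
open MonoidAlgebra Pointwise

/-- Let `G` be an infinite, finitely generated group and `M` a Banach space that is a left
`ℂG`-module on which each `g ∈ G` acts as a continuous linear map (via `ρ`), with
`ℂG ⊆ M ⊆ Lᵖ(G)`. Here `ι : ℂG → M` is the first inclusion and `j : M → (G → ℂ)` realizes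
elements of `M` as `p`-summable formal sums, compatibly with the `G`-actions.
Then the inclusion `ℂG → M` induces an injective homomorphism `H¹(G,ℂG) → H¹(G,M)`:
a `ℂG`-valued 1-cocycle which becomes a coboundary in `M` is already a coboundary in `ℂG`. -/
theorem stmt2 {G : Type*} [Group G] [Infinite G] [Group.FG G]
    {M : Type*} [NormedAddCommGroup M] [NormedSpace ℂ M] [CompleteSpace M]
    (ρ : G →* (M →L[ℂ] M))
    (p : ℕ) (hp : 1 ≤ p)
    (ι : MonoidAlgebra ℂ G →ₗ[ℂ] M) (hι : Function.Injective ι)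
    (j : M →ₗ[ℂ] (G → ℂ)) (hj : Function.Injective j)
    (hcomp : ∀ (c : MonoidAlgebra ℂ G) (x : G), j (ι c) x = c.coeff x)
    (hmem : ∀ f : M, Summable fun x => ‖j f x‖ ^ (p : ℝ))
    (hequiv : ∀ (g : G) (f : M) (x : G), j (ρ g f) x = j f (g⁻¹ * x)) :
    ∀ b : G → MonoidAlgebra ℂ G,
      (∀ g h : G, of ℂ G g * b h - b (g * h) + b g = 0) →
      (∃ f : M, ∀ g : G, ι (b g) = ρ g f - f) →
      ∃ e : MonoidAlgebra ℂ G, ∀ g : G, b g = of ℂ G g * e - e := by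
  classical
  rintro b _hcoc ⟨f, hf⟩
  set u : G → ℂ := j f with hu
  -- coefficients of the cocycle in terms of u
  have hb : ∀ (g x : G), (b g).coeff x = u (g⁻¹ * x) - u x := by
    intro g x
    have h1 : j (ι (b g)) x = j (ρ g f) x - j f x := by
      rw [hf g, map_sub]; rfl
    rw [hcomp, hequiv] at h1
    exact h1
  -- a symmetric finite generating set
  obtain ⟨S, hS⟩ := Group.FG.out (G := G)
  set T : Finset G := S ∪ S⁻¹ with hT
  have hTsymm : ∀ s ∈ T, s⁻¹ ∈ T := by
    intro s hs
    rcases Finset.mem_union.1 hs with h | h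
    · exact Finset.mem_union.2 (Or.inr (Finset.inv_mem_inv h))
    · rcases Finset.mem_inv.1 h with ⟨t, ht, rfl⟩
      rw [inv_inv]
      exact Finset.mem_union.2 (Or.inl ht)
  have hTcl : ∀ g : G, g ∈ Submonoid.closure (T : Set G) := by
    intro g
    have h1 : (Subgroup.closure (S : Set G)).toSubmonoid
        = Submonoid.closure ((S : Set G) ∪ (S : Set G)⁻¹) :=
      Subgroup.closure_toSubmonoid _
    have h2 : (T : Set G) = (S : Set G) ∪ (S : Set G)⁻¹ := by
      simp [hT]
    rw [h2, ← h1, hS]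
    exact Subgroup.mem_top g
  -- the finite exceptional set
  set F : Finset G := T.biUnion (fun s => (b s).coeff.support) with hF
  have hstep : ∀ s ∈ T, ∀ x ∉ F, u (s * x) = u x := by
    intro s hs x hx
    have hs' : s⁻¹ ∈ T := hTsymm s hs
    have h0 : (b s⁻¹).coeff x = 0 := by
      by_contra h
      exact hx (Finset.mem_biUnion.2 ⟨s⁻¹, hs', Finsupp.mem_support_iff.2 h⟩)
    have := hb s⁻¹ x
    rw [h0, inv_inv] at this
    exact (sub_eq_zero.mp this.symm)
  -- the reachability relation on the complement of F
  set R : G → G → Prop := fun x y => x ∉ F ∧ y ∉ F ∧ ∃ s ∈ T, y = s * x with hR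
  have hRsymm : Symmetric R := by
    rintro x y ⟨hx, hy, s, hs, rfl⟩
    exact ⟨hy, hx, s⁻¹, hTsymm s hs, by group⟩
  have hRu : ∀ {x y}, R x y → u y = u x := by
    rintro x y ⟨hx, _, s, hs, rfl⟩
    exact hstep s hs x hx
  set C : G → Set G := fun x => {y | Relation.ReflTransGen R x y} with hC
  have hCu : ∀ {x y}, y ∈ C x → u y = u x := by
    intro x y h
    induction h with
    | refl => rfl
    | tail _ h2 ih => rw [hRu h2, ih]
  have hCF : ∀ {x y}, x ∉ F → y ∈ C x → y ∉ F := by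
    intro x y hx h
    induction h with
    | refl => exact hx
    | tail _ h2 _ => exact h2.2.1
  have hCsymm : ∀ {x y}, y ∈ C x → x ∈ C y := by
    intro x y h
    exact (@Relation.ReflTransGen.stdSymm _ R ⟨fun a b h => hRsymm h⟩).symm _ _ h
  -- finiteness from p-summability
  have hsmallfin : ∀ ε : ℝ, 0 < ε → {x | ¬ ‖u x‖ ^ (p : ℝ) < ε}.Finite := by
    intro ε hε
    have h := (hmem f).tendsto_cofinite_zero
    have h2 := h.eventually (gt_mem_nhds hε)
    simp only [Filter.eventually_cofinite] at h2
    exact h2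
  have hCfin : ∀ z, u z ≠ 0 → (C z).Finite := by
    intro z hz
    have hε : 0 < ‖u z‖ ^ (p : ℝ) :=
      Real.rpow_pos_of_pos (norm_pos_iff.2 hz) _
    refine (hsmallfin _ hε).subset ?_
    intro y hy
    simp only [Set.mem_setOf_eq]
    rw [hCu hy]
    exact lt_irrefl _
  -- the support of u is finite
  have hmain : {x | u x ≠ 0}.Finite := by
    set W : Finset G := T.biUnion (fun s => F.image (fun w => s⁻¹ * w)) with hW
    have hsub : {x | u x ≠ 0} ⊆ ↑F ∪ ⋃ z ∈ (W : Set G), (C z ∩ {y | u y ≠ 0}) := by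
      intro x hx
      by_cases hxF : x ∈ F
      · exact Or.inl hxF
      refine Or.inr ?_
      have hexists : ∃ z ∈ C x, ∃ s ∈ T, s * z ∈ F := by
        by_contra hcon
        push_neg at hcon
        have hclosed : ∀ z ∈ C x, ∀ s ∈ T, s * z ∈ C x := by
          intro z hz s hs
          exact Relation.ReflTransGen.tail hz
            ⟨hCF hxF hz, hcon z hz s hs, s, hs, rfl⟩
        have hall' : ∀ g : G, ∀ z ∈ C x, g * z ∈ C x := by
          intro g
          have hg := hTcl g
          induction hg using Submonoid.closure_induction with
          | mem s hs => exact fun z hz => hclosed z hz s hs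
          | one => intro z hz; simpa using hz
          | mul g h _ _ ihg ihh =>
            intro z hz
            rw [mul_assoc]
            exact ihg _ (ihh z hz)
        have hall : ∀ g : G, g * x ∈ C x :=
          fun g => hall' g x Relation.ReflTransGen.refl
        have hinf : (C x).Infinite :=
          Set.infinite_of_injective_forall_mem (mul_left_injective x) hall
        exact hinf (hCfin x hx)
      obtain ⟨z, hz, s, hs, hsF⟩ := hexists
      have hzW : z ∈ W :=
        Finset.mem_biUnion.2 ⟨s, hs, Finset.mem_image.2 ⟨s * z, hsF, by group⟩⟩
      have hxz : x ∈ C z := hCsymm hz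
      exact Set.mem_biUnion hzW ⟨hxz, hx⟩
    refine Set.Finite.subset ?_ hsub
    refine (F.finite_toSet.union (Set.Finite.biUnion W.finite_toSet ?_))
    intro z _
    by_cases hz : u z = 0
    · have : C z ∩ {y | u y ≠ 0} = ∅ := by
        ext y
        simp only [Set.mem_inter_iff, Set.mem_setOf_eq, Set.mem_empty_iff_false,
          iff_false, not_and]
        intro hy hy2
        exact hy2 (by rw [hCu hy]; exact hz)
      rw [this]; exact Set.finite_empty
    · exact ((hCfin z hz).inter_of_left _)
  -- build e
  set e : MonoidAlgebra ℂ G :=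
    MonoidAlgebra.ofCoeff (Finsupp.onFinset hmain.toFinset u (fun a ha => hmain.mem_toFinset.2 ha)) with he
  have heval : ∀ x, e.coeff x = u x := fun x => rfl
  have hιe : ι e = f := by
    apply hj
    funext x
    rw [hcomp]
    exact heval x
  refine ⟨e, fun g => ?_⟩
  apply hι
  have h1 : ι (of ℂ G g * e) = ρ g f := by
    apply hj
    funext x
    rw [hcomp, hequiv]
    have h2 : (of ℂ G g * e).coeff x = e.coeff (g⁻¹ * x) := by
      simpa using MonoidAlgebra.coeff_single_mul_apply e (1 : ℂ) g x
    rw [h2, heval]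
  rw [map_sub, h1, hιe, hf]
end

section
/- Let G be an infinite, finitely generated group and M a Banach space and left \mathbb{C}G-module with \mathbb{C}G \subseteq M \subseteq L^p(G) for some natural number p, on which G acts by continuous linear maps. If H^1(G, M) = 0, then G has exactly one end. -/
open scoped Classical


/-- The Cayley graph of a group `G` with respect to a generating set `S`. -/
def cayleyGraph {G : Type*} [Group G] (S : Finset G) : SimpleGraph G :=
  SimpleGraph.fromRel (fun x y => ∃ s ∈ S, y = s * x)


section aux
variable {G : Type*} [Group G] {S : Finset G}

lemma cayley_adj_mul {x y : G} (a : G) (h : (cayleyGraph S).Adj x y) :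
    (cayleyGraph S).Adj (x * a) (y * a) := by
  obtain ⟨hne, h⟩ := h
  refine ⟨by simpa using hne, ?_⟩
  rcases h with ⟨s, hs, rfl⟩ | ⟨s, hs, rfl⟩
  · exact Or.inl ⟨s, hs, by group⟩
  · exact Or.inr ⟨s, hs, by group⟩

/-- Right multiplication as a graph homomorphism of the Cayley graph. -/
def cayleyMulRight (S : Finset G) (a : G) : cayleyGraph S →g cayleyGraph S :=
  ⟨fun x => x * a, fun h => cayley_adj_mul a h⟩

lemma cayley_preconnected (hS : Subgroup.closure (S : Set G) = ⊤) :
    (cayleyGraph S).Preconnected := by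
  have key : ∀ g : G, (cayleyGraph S).Reachable 1 g := by
    intro g
    have hg : g ∈ Subgroup.closure (S : Set G) := hS ▸ Subgroup.mem_top g
    induction hg using Subgroup.closure_induction with
    | mem s hs =>
        rcases eq_or_ne s 1 with rfl | hne
        · exact SimpleGraph.Reachable.refl 1
        · exact SimpleGraph.Adj.reachable ⟨hne.symm, Or.inl ⟨s, hs, (mul_one s).symm⟩⟩
    | one => exact SimpleGraph.Reachable.refl 1
    | mul x y hx hy ihx ihy =>
        have h1 : (cayleyGraph S).Reachable (1 * y) (x * y) := ihx.map (cayleyMulRight S y)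
        rw [one_mul] at h1
        exact ihy.trans h1
    | inv x hx ihx =>
        have h1 : (cayleyGraph S).Reachable (1 * x⁻¹) (x * x⁻¹) := ihx.map (cayleyMulRight S x⁻¹)
        rw [one_mul, mul_inv_cancel] at h1
        exact h1.symm
  intro x y
  have h1 : (cayleyGraph S).Reachable (1 * x) (y * x⁻¹ * x) := (key (y * x⁻¹)).map (cayleyMulRight S x)
  rw [one_mul, inv_mul_cancel_right] at h1
  exact h1

noncomputable def cayley_locallyFinite (S : Finset G) : (cayleyGraph S).LocallyFinite := by
  intro v
  apply Set.Finite.fintype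
  have hsub : (cayleyGraph S).neighborSet v ⊆
      (fun s => s * v) '' ↑S ∪ (fun s => s⁻¹ * v) '' ↑S := by
    rintro w ⟨hne, h⟩
    rcases h with ⟨s, hs, rfl⟩ | ⟨s, hs, hv⟩
    · exact Or.inl ⟨s, hs, rfl⟩
    · exact Or.inr ⟨s, hs, by rw [hv]; group⟩
  exact ((S.finite_toSet.image _).union (S.finite_toSet.image _)).subset hsub

end aux

section ends
variable {V : Type*} (Γ : SimpleGraph V)

/-- Universe-polymorphic copy of `SimpleGraph.end_componentCompl_infinite`. -/
lemma my_end_componentCompl_infinite (e : Γ.end) (K : (Finset V)ᵒᵖ) :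
    ((e : (j : (Finset V)ᵒᵖ) → Γ.componentComplFunctor.obj j) K).supp.Infinite := by
  refine (e.val K).infinite_iff_in_all_ranges.mpr (fun L h => ?_)
  change Opposite.unop K ⊆ Opposite.unop (Opposite.op L) at h
  exact ⟨e.val (Opposite.op L), (e.prop (CategoryTheory.opHomOfLE h))⟩

/-- Universe-polymorphic copy of `SimpleGraph.nonempty_ends_of_infinite`. -/
lemma my_nonempty_ends_of_infinite [Γ.LocallyFinite] [Fact Γ.Preconnected] [Infinite V] :
    Γ.end.Nonempty := by
  classical
  haveI : ∀ K : (Finset V)ᵒᵖ, Finite (Γ.componentComplFunctor.obj K) :=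
    fun K => Γ.componentCompl_finite K.unop
  haveI : ∀ K : (Finset V)ᵒᵖ, Nonempty (Γ.componentComplFunctor.obj K) :=
    fun K => Γ.componentCompl_nonempty_of_infinite K.unop
  apply nonempty_sections_of_finite_inverse_system Γ.componentComplFunctor

end ends

/-- Let `G` be an infinite, finitely generated group and `M` a Banach space and left
`ℂG`-module with `ℂG ⊆ M ⊆ Lᵖ(G)` on which `G` acts by continuous linear maps (via `ρ`,
with `ι : ℂG → M` and `j : M → (G → ℂ)` realizing the inclusions compatibly with the
actions).  If `H¹(G,M) = 0` (every 1-cocycle with values in `M` is a coboundary), then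
`G` has exactly one end: for every finite symmetric generating set `S` the Cayley graph
of `G` has exactly one end. -/
theorem stmt3 {G : Type*} [Group G] [Infinite G] [Group.FG G]
    {M : Type*} [NormedAddCommGroup M] [NormedSpace ℂ M] [CompleteSpace M]
    (ρ : G →* (M →L[ℂ] M))
    (p : ℕ) (hp : 1 ≤ p)
    (ι : MonoidAlgebra ℂ G →ₗ[ℂ] M) (hι : Function.Injective ι)
    (j : M →ₗ[ℂ] (G → ℂ)) (hj : Function.Injective j)
    (hcomp : ∀ (c : MonoidAlgebra ℂ G) (x : G), j (ι c) x = c.coeff x)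
    (hmem : ∀ f : M, Summable fun x => ‖j f x‖ ^ (p : ℝ))
    (hequiv : ∀ (g : G) (f : M) (x : G), j (ρ g f) x = j f (g⁻¹ * x))
    (hvanish : ∀ b : G → M, (∀ g h : G, ρ g (b h) - b (g * h) + b g = 0) →
      ∃ α : M, ∀ g : G, b g = ρ g α - α) :
    ∀ S : Finset G, Subgroup.closure (S : Set G) = ⊤ → (∀ s ∈ S, s⁻¹ ∈ S) →
      Nat.card (cayleyGraph S).end = 1 := by
  intro S hS hSym
  haveI : (cayleyGraph S).LocallyFinite := cayley_locallyFinite S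
  have hpc : (cayleyGraph S).Preconnected := cayley_preconnected hS
  haveI : Fact (cayleyGraph S).Preconnected := ⟨hpc⟩
  -- Key step: for every finite `K`, there is at most one infinite component outside `K`.
  have key : ∀ (K : Finset G) (C D : (cayleyGraph S).ComponentCompl ↑K),
      C.supp.Infinite → D.supp.Infinite → C = D := by
    intro K C D hCinf hDinf
    by_contra hCD
    -- the indicator function of the component `C`
    set φ : G → ℂ := fun x => if x ∈ C.supp then (1 : ℂ) else 0 with hφ
    set u : G → G → ℂ := fun g x => φ (g⁻¹ * x) - φ x with hu
    -- `u s` has finite support for each generator `s`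
    have huS : ∀ s ∈ S, (Function.support (u s)).Finite := by
      intro s hs
      have hsub : Function.support (u s) ⊆ ↑K ∪ (fun k => s * k) '' ↑K := by
        intro x hx
        by_contra hmemx
        simp only [Set.mem_union, not_or] at hmemx
        obtain ⟨hxK, hxim⟩ := hmemx
        have hsx : s⁻¹ * x ∉ (↑K : Set G) := by
          intro hmem'
          exact hxim ⟨s⁻¹ * x, hmem', by group⟩
        have heq : φ (s⁻¹ * x) = φ x := by
          rcases eq_or_ne (s⁻¹ * x) x with he | hne
          · rw [he]
          · have hadj : (cayleyGraph S).Adj x (s⁻¹ * x) :=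
              ⟨hne.symm, Or.inl ⟨s⁻¹, hSym s hs, rfl⟩⟩
            by_cases hxC : x ∈ C.supp
            · have : s⁻¹ * x ∈ C.supp :=
                SimpleGraph.ComponentCompl.mem_of_adj x (s⁻¹ * x) hxC hsx hadj
              simp [hφ, hxC, this]
            · have hnot : s⁻¹ * x ∉ C.supp := by
                intro hmem'
                exact hxC (SimpleGraph.ComponentCompl.mem_of_adj (s⁻¹ * x) x hmem' hxK hadj.symm)
              simp [hφ, hxC, hnot]
        have : u s x = 0 := by simp [hu, heq]
        exact hx this
      exact (K.finite_toSet.union (K.finite_toSet.image _)).subset hsub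
    -- hence `u g` has finite support for every `g`
    have hufin : ∀ g : G, (Function.support (u g)).Finite := by
      intro g
      have hg : g ∈ Subgroup.closure (S : Set G) := hS ▸ Subgroup.mem_top g
      induction hg using Subgroup.closure_induction with
      | mem s hs => exact huS s hs
      | one =>
          have : Function.support (u 1) ⊆ ∅ := by
            intro x hx
            simp [hu] at hx
          exact Set.finite_empty.subset this
      | mul x y hx hy ihx ihy =>
          have hsub : Function.support (u (x * y)) ⊆
              (fun z => x * z) '' Function.support (u y) ∪ Function.support (u x) := by
            intro t ht
            by_cases hxt : u x t = 0
            · left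
              refine ⟨x⁻¹ * t, ?_, by group⟩
              intro h0
              apply ht
              have : u (x * y) t = u y (x⁻¹ * t) + u x t := by
                simp only [hu, mul_inv_rev, mul_assoc]
                ring
              rw [this, h0, hxt, add_zero]
            · exact Or.inr hxt
          exact ((ihy.image _).union ihx).subset hsub
      | inv x hx ihx =>
          have hsub : Function.support (u x⁻¹) ⊆
              (fun z => x⁻¹ * z) '' Function.support (u x) := by
            intro t ht
            refine ⟨x * t, ?_, by group⟩
            intro h0
            apply ht
            have h1 : u x (x * t) = φ t - φ (x * t) := by
              simp [hu, inv_mul_cancel_left]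
            have h2 : u x⁻¹ t = φ (x * t) - φ t := by simp [hu]
            rw [h2]
            have := h0
            rw [h1] at this
            linear_combination -this
          exact (ihx.image _).subset hsub
    -- package `u g` as an element of the monoid algebra
    set c : G → MonoidAlgebra ℂ G := fun g =>
      (MonoidAlgebra.ofCoeff (Finsupp.mk (hufin g).toFinset (u g)
        (fun a => by simp [Function.mem_support])) : MonoidAlgebra ℂ G) with hc
    have hcval : ∀ g x, (c g).coeff x = u g x := fun g x => rfl
    -- the corresponding cocycle with values in `M`
    set b : G → M := fun g => ι (c g) with hb
    have hcocycle : ∀ g h : G, ρ g (b h) - b (g * h) + b g = 0 := by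
      intro g h
      apply hj
      rw [map_add, map_sub, map_zero]
      funext x
      have e1 : j (ρ g (b h)) x = u h (g⁻¹ * x) := by
        rw [hequiv g (b h) x, hb]
        rw [hcomp (c h) (g⁻¹ * x)]
        exact hcval h (g⁻¹ * x)
      have e2 : j (b (g * h)) x = u (g * h) x := by rw [hb, hcomp]; exact hcval _ _
      have e3 : j (b g) x = u g x := by rw [hb, hcomp]; exact hcval _ _
      simp only [Pi.add_apply, Pi.sub_apply, Pi.zero_apply, e1, e2, e3]
      simp only [hu, mul_inv_rev, mul_assoc]
      ring
    obtain ⟨α, hα⟩ := hvanish b hcocycle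
    set ψ : G → ℂ := j α with hψdef
    have hψ : ∀ g x : G, u g x = ψ (g⁻¹ * x) - ψ x := by
      intro g x
      have h1 : j (b g) x = j (ρ g α - α) x := by rw [hα g]
      rw [map_sub] at h1
      have h2 : j (b g) x = u g x := by rw [hb, hcomp]; exact hcval _ _
      have h3 : j (ρ g α) x = ψ (g⁻¹ * x) := hequiv g α x
      rw [h2] at h1
      rw [h1]
      simp [Pi.sub_apply, h3, hψdef]
    -- `φ - ψ` is constant
    have hconst : ∀ y : G, ψ y = φ y - (φ 1 - ψ 1) := by
      intro y
      have h1 := hψ y⁻¹ 1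
      simp only [hu, inv_inv, mul_one] at h1
      linear_combination -h1
    -- a constant value taken on an infinite set must be `0`
    have hzero : ∀ (T : Set G), T.Infinite → ∀ v : ℂ, (∀ x ∈ T, ψ x = v) → v = 0 := by
      intro T hT v hvT
      by_contra hv
      have hpos : (0 : ℝ) < ‖v‖ ^ (p : ℝ) :=
        Real.rpow_pos_of_pos (norm_pos_iff.mpr hv) _
      have htend := (hmem α).tendsto_cofinite_zero
      have hevent := htend.eventually_lt_const hpos
      rw [Filter.eventually_cofinite] at hevent
      refine hT (hevent.subset fun x hx => ?_)
      have hval : j α x = v := hvT x hx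
      simp only [Set.mem_setOf_eq, hval, not_lt, le_refl]
    have h1 : (1 : ℂ) - (φ 1 - ψ 1) = 0 :=
      hzero C.supp hCinf _ (fun x hx => by rw [hconst x, show φ x = 1 from if_pos hx])
    have hdisj : Disjoint (C : Set G) (D : Set G) :=
      SimpleGraph.ComponentCompl.pairwise_disjoint hCD
    have h2 : (0 : ℂ) - (φ 1 - ψ 1) = 0 := by
      refine hzero D.supp hDinf _ (fun x hx => ?_)
      have hnot : x ∉ C.supp := fun hxc => Set.disjoint_left.mp hdisj hxc hx
      rw [hconst x, show φ x = 0 from if_neg hnot]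
    exact one_ne_zero (by linear_combination h1 - h2)
  -- conclude: the set of ends is a singleton
  rw [Nat.card_eq_one_iff_unique]
  constructor
  · constructor
    intro e1 e2
    apply Subtype.ext
    funext K
    exact key K.unop (e1.val K) (e2.val K)
      (my_end_componentCompl_infinite _ e1 K) (my_end_componentCompl_infinite _ e2 K)
  · obtain ⟨e, he⟩ := my_nonempty_ends_of_infinite (cayleyGraph S)
    exact ⟨⟨e, he⟩⟩
end

section
/- Let G be an infinite, finitely generated group satisfying the strong F\o lner condition, and let M be a Banach space and \mathbb{C}G-module with \mathbb{C}G \subseteq M \subseteq L^p(G) for some p \geq 2, on which G acts by continuous linear maps, such that ||\alpha||_1 \geq ||\alpha||_M \geq ||\alpha||_p for every \alpha \in \mathbb{C}G. Then there exists a sequence (\beta_n) in M with ||\beta_n||_M = 1 and ||g\beta_n - \beta_n||_M \to 0 for every g in G; consequently H^1(G, M) is not Hausdorff. -/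
open Filter MonoidAlgebra

/-- The `ℓ¹` norm of an element of `ℂG`. -/
noncomputable def l1Norm {G : Type*} [Group G] (c : MonoidAlgebra ℂ G) : ℝ :=
  ∑ x ∈ c.coeff.support, ‖c.coeff x‖

/-- The `ℓᵖ` norm of an element of `ℂG`. -/
noncomputable def lpNorm {G : Type*} [Group G] (p : ℕ) (c : MonoidAlgebra ℂ G) : ℝ :=
  (∑ x ∈ c.coeff.support, ‖c.coeff x‖ ^ (p : ℝ)) ^ ((p : ℝ)⁻¹)

set_option linter.unusedSectionVars false
set_option linter.unusedVariables false
section aux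
variable {G : Type*} [Group G] [DecidableEq G]

noncomputable def chi (X : Finset G) : MonoidAlgebra ℂ G := ∑ x ∈ X, MonoidAlgebra.single x (1:ℂ)

theorem chi_apply (X : Finset G) (y : G) : (chi X).coeff y = if y ∈ X then 1 else 0 := by
  rw [chi, MonoidAlgebra.coeff_sum, Finset.sum_apply']
  simp [MonoidAlgebra.coeff_single, Finsupp.single_apply]

theorem chi_support (X : Finset G) : (chi X).coeff.support = X := by
  ext y
  simp [Finsupp.mem_support_iff, chi_apply]

theorem lpNorm_chi (p : ℕ) (X : Finset G) : lpNorm p (chi X) = (X.card : ℝ) ^ ((p:ℝ)⁻¹) := by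
  rw [lpNorm, chi_support]
  congr 1
  rw [Finset.sum_congr rfl (fun x hx => by rw [chi_apply, if_pos hx])]
  simp

theorem l1_diff_bound (X Y : Finset G) :
    l1Norm (chi Y - chi X) ≤ ((Y \ X).card : ℝ) + ((X \ Y).card : ℝ) := by
  have happ : ∀ x : G, (chi Y - chi X).coeff x = (chi Y).coeff x - (chi X).coeff x := fun x => rfl
  have hsupp : (chi Y - chi X).coeff.support ⊆ (Y \ X) ∪ (X \ Y) := by
    intro x hx
    rw [Finsupp.mem_support_iff, happ, chi_apply, chi_apply] at hx
    simp only [Finset.mem_union, Finset.mem_sdiff]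
    by_cases h1 : x ∈ Y <;> by_cases h2 : x ∈ X <;> simp [h1, h2] at hx ⊢
  calc l1Norm (chi Y - chi X) ≤ ∑ x ∈ (chi Y - chi X).coeff.support, 1 := by
        apply Finset.sum_le_sum
        intro x _
        rw [happ, chi_apply, chi_apply]
        split_ifs <;> norm_num
    _ = ((chi Y - chi X).coeff.support.card : ℝ) := by simp
    _ ≤ (((Y \ X) ∪ (X \ Y)).card : ℝ) := by
        exact_mod_cast Finset.card_le_card hsupp
    _ ≤ _ := by exact_mod_cast Finset.card_union_le _ _

theorem sdiff_image_card (g : G) (X : Finset G) :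
    (X.image (fun x => g * x) \ X).card = (X \ X.image (fun x => g⁻¹ * x)).card := by
  have h1 : (X.image (fun x => g⁻¹ * x)).image (fun x => g * x) = X := by
    rw [Finset.image_image]; simp [Function.comp]
  have h2 : X.image (fun x => g * x) \ X
      = (X \ X.image (fun x => g⁻¹ * x)).image (fun x => g * x) := by
    rw [Finset.image_sdiff, h1]
    exact mul_right_injective g
  rw [h2, Finset.card_image_of_injective _ (mul_right_injective g)]

theorem folner_bound (S : Finset G)
    (hS : Submonoid.closure (S : Set G) = ⊤) (N : ℕ) (g : G) :
    ∃ k : ℕ, ∀ X : Finset G, (∀ s ∈ S, (X \ X.image (fun x => s * x)).card < N) →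
      (X \ X.image (fun x => g * x)).card ≤ k * N := by
  have hg : g ∈ Submonoid.closure (S : Set G) := hS ▸ Submonoid.mem_top g
  induction hg using Submonoid.closure_induction with
  | mem s hs =>
    exact ⟨1, fun X hX => by rw [one_mul]; exact (hX s hs).le⟩
  | one =>
    refine ⟨0, fun X hX => ?_⟩
    simp
  | mul a b _ _ ha hb =>
    obtain ⟨k₁, h₁⟩ := ha
    obtain ⟨k₂, h₂⟩ := hb
    refine ⟨k₁ + k₂, fun X hX => ?_⟩
    have key : X \ X.image (fun x => (a * b) * x) ⊆
        (X \ X.image (fun x => a * x)) ∪ (X.image (fun x => a * x) \ X.image (fun x => (a * b) * x)) := by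
      intro x hx
      simp only [Finset.mem_sdiff, Finset.mem_union] at hx ⊢
      by_cases h : x ∈ X.image (fun x => a * x) <;> tauto
    have him : X.image (fun x => (a * b) * x) = (X.image (fun x => b * x)).image (fun x => a * x) := by
      rw [Finset.image_image]; simp [Function.comp, mul_assoc]
    have hmid : (X.image (fun x => a * x) \ X.image (fun x => (a * b) * x)).card
        = (X \ X.image (fun x => b * x)).card := by
      rw [him, ← Finset.image_sdiff _ _ (mul_right_injective a),
        Finset.card_image_of_injective _ (mul_right_injective a)]
    calc (X \ X.image (fun x => (a * b) * x)).card
        ≤ _ := Finset.card_le_card key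
      _ ≤ (X \ X.image (fun x => a * x)).card
          + (X.image (fun x => a * x) \ X.image (fun x => (a * b) * x)).card := Finset.card_union_le _ _
      _ ≤ k₁ * N + k₂ * N := by rw [hmid]; exact Nat.add_le_add (h₁ X hX) (h₂ X hX)
      _ = (k₁ + k₂) * N := (Nat.add_mul _ _ _).symm

end aux

/-- Let `G` be an infinite, finitely generated group satisfying the strong Følner condition,
and `M` a Banach space and `ℂG`-module with `ℂG ⊆ M ⊆ Lᵖ(G)` for some `p ≥ 2`, on which `G`
acts by continuous linear maps, such that `‖α‖₁ ≥ ‖α‖_M ≥ ‖α‖ₚ` for every `α ∈ ℂG`.  Then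
there is a sequence `(β_n)` in `M` with `‖β_n‖ = 1` and `‖gβ_n - β_n‖ → 0` for every `g ∈ G`;
consequently `H¹(G,M)` is not Hausdorff (the set of principal cocycles is not closed in the
topology of pointwise convergence). -/
theorem stmt8 {G : Type*} [Group G] [Infinite G] [Group.FG G] [DecidableEq G]
    {M : Type*} [NormedAddCommGroup M] [NormedSpace ℂ M] [CompleteSpace M]
    (ρ : G →* (M →L[ℂ] M))
    (p : ℕ) (hp : 2 ≤ p)
    (ι : MonoidAlgebra ℂ G →ₗ[ℂ] M) (hι : Function.Injective ι)
    (j : M →ₗ[ℂ] (G → ℂ)) (hj : Function.Injective j)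
    (hcomp : ∀ (c : MonoidAlgebra ℂ G) (x : G), j (ι c) x = c.coeff x)
    (hmem : ∀ f : M, Summable fun x => ‖j f x‖ ^ (p : ℝ))
    (hequiv : ∀ (g : G) (f : M) (x : G), j (ρ g f) x = j f (g⁻¹ * x))
    (hnorm : ∀ c : MonoidAlgebra ℂ G, ‖ι c‖ ≤ l1Norm c ∧ lpNorm p c ≤ ‖ι c‖)
    (hSF : ∀ S : Finset G, ∃ N : ℕ, ∀ m : ℕ, ∃ X : Finset G,
      X.card > m ∧ ∀ g ∈ S, (X \ X.image (fun x => g * x)).card < N) :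
    (∃ β : ℕ → M, (∀ n, ‖β n‖ = 1) ∧
      ∀ g : G, Tendsto (fun n => ‖ρ g (β n) - β n‖) atTop (nhds 0)) ∧
    ¬ IsClosed {f : G → M | ∃ α : M, ∀ g : G, f g = ρ g α - α} := by
  -- a finite monoid generating set
  obtain ⟨S, hS⟩ : ∃ S : Finset G, Submonoid.closure (S : Set G) = ⊤ :=
    Monoid.fg_def.mp (Group.fg_iff_monoid_fg.mp ‹Group.FG G›)
  obtain ⟨N, hN⟩ := hSF S
  choose X hXcard hXfol using hN
  have hppos : (0:ℝ) < (p:ℝ)⁻¹ := by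
    have : (0:ℝ) < (p:ℝ) := by exact_mod_cast lt_of_lt_of_le two_pos hp
    positivity
  -- the sequence
  set v : ℕ → M := fun n => ι (chi (X n)) with hv
  have hrlow : ∀ n, ((X n).card : ℝ) ^ ((p:ℝ)⁻¹) ≤ ‖v n‖ := fun n => by
    have := (hnorm (chi (X n))).2
    rwa [lpNorm_chi] at this
  have hcpos : ∀ n, (0:ℝ) < ((X n).card : ℝ) := fun n => by
    have : 0 < (X n).card := lt_of_le_of_lt (Nat.zero_le n) (hXcard n)
    exact_mod_cast this
  have hrpos : ∀ n, (0:ℝ) < ‖v n‖ := fun n =>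
    lt_of_lt_of_le (Real.rpow_pos_of_pos (hcpos n) _) (hrlow n)
  set β : ℕ → M := fun n => ((‖v n‖⁻¹ : ℝ) : ℂ) • v n with hβ
  have hβ1 : ∀ n, ‖β n‖ = 1 := fun n => by
    rw [hβ]
    simp only [norm_smul, Complex.norm_real, Real.norm_eq_abs,
      abs_of_nonneg (inv_nonneg.mpr (norm_nonneg (v n)))]
    exact inv_mul_cancel₀ (ne_of_gt (hrpos n))
  -- translation formula
  have htr : ∀ (g : G) (Y : Finset G),
      ρ g (ι (chi Y)) = ι (chi (Y.image (fun x => g * x))) := by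
    intro g Y
    apply hj
    funext x
    rw [hequiv, hcomp, hcomp, chi_apply, chi_apply]
    have hmem' : (g⁻¹ * x ∈ Y) ↔ x ∈ Y.image (fun y => g * y) := by
      simp only [Finset.mem_image]
      constructor
      · intro h; exact ⟨g⁻¹ * x, h, by group⟩
      · rintro ⟨a, ha, rfl⟩; simpa using ha
    simp only [hmem']
  -- the key bound
  have hβ2 : ∀ g : G, Tendsto (fun n => ‖ρ g (β n) - β n‖) atTop (nhds 0) := by
    intro g
    obtain ⟨k₁, hk₁⟩ := folner_bound S hS N g⁻¹
    obtain ⟨k₂, hk₂⟩ := folner_bound S hS N g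
    set C : ℝ := (k₁ * N : ℕ) + (k₂ * N : ℕ) with hC
    have hbound : ∀ n, ‖ρ g (β n) - β n‖ ≤ C / ((X n).card : ℝ) ^ ((p:ℝ)⁻¹) := by
      intro n
      have hdiff : ρ g (β n) - β n
          = ((‖v n‖⁻¹ : ℝ) : ℂ) • (ι (chi ((X n).image (fun x => g * x)) - chi (X n))) := by
        rw [hβ]
        simp only [map_smul, ← smul_sub]
        rw [map_sub, htr]
      rw [hdiff, norm_smul]
      have hl1 : ‖ι (chi ((X n).image (fun x => g * x)) - chi (X n))‖ ≤ C := by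
        refine le_trans (hnorm _).1 (le_trans (l1_diff_bound _ _) ?_)
        rw [hC]
        have e1 : ((X n).image (fun x => g * x) \ X n).card ≤ k₁ * N := by
          rw [sdiff_image_card]
          exact hk₁ (X n) (hXfol n)
        have e2 : (X n \ (X n).image (fun x => g * x)).card ≤ k₂ * N := hk₂ (X n) (hXfol n)
        exact add_le_add (by exact_mod_cast e1) (by exact_mod_cast e2)
      have hnorminv : ‖((‖v n‖⁻¹ : ℝ) : ℂ)‖ = ‖v n‖⁻¹ := by
        simp [abs_of_nonneg (inv_nonneg.mpr (norm_nonneg (v n)))]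
      rw [hnorminv, div_eq_inv_mul]
      have h1 : ‖v n‖⁻¹ ≤ (((X n).card : ℝ) ^ ((p:ℝ)⁻¹))⁻¹ :=
        inv_anti₀ (Real.rpow_pos_of_pos (hcpos n) _) (hrlow n)
      have hCnn : (0:ℝ) ≤ C := by positivity
      exact mul_le_mul h1 hl1 (norm_nonneg _)
        (inv_nonneg.mpr (Real.rpow_pos_of_pos (hcpos n) _).le)
    have hcardtop : Tendsto (fun n => ((X n).card : ℝ)) atTop atTop := by
      apply tendsto_atTop_mono (fun n => ?_) tendsto_natCast_atTop_atTop
      exact_mod_cast (hXcard n).le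
    have hrp : Tendsto (fun n => ((X n).card : ℝ) ^ ((p:ℝ)⁻¹)) atTop atTop :=
      (tendsto_rpow_atTop hppos).comp hcardtop
    have hdiv : Tendsto (fun n => C / ((X n).card : ℝ) ^ ((p:ℝ)⁻¹)) atTop (nhds 0) :=
      Tendsto.div_atTop tendsto_const_nhds hrp
    exact squeeze_zero (fun n => norm_nonneg _) hbound hdiv
  refine ⟨⟨β, hβ1, hβ2⟩, ?_⟩
  intro hB
  -- the comparison map on the generating set
  set T : M →L[ℂ] ({x // x ∈ S} → M) :=
    ContinuousLinearMap.pi (fun s : {x // x ∈ S} => ρ (s : G) - ContinuousLinearMap.id ℂ M) with hT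
  have hTapp : ∀ (α : M) (s : {x // x ∈ S}), T α s = ρ (s : G) α - α := fun α s => rfl
  -- invariance propagates from S to all of G
  have hinv : ∀ α : M, (∀ s ∈ S, ρ s α = α) → ∀ g : G, ρ g α = α := by
    intro α hα g
    have hg : g ∈ Submonoid.closure (S : Set G) := hS ▸ Submonoid.mem_top g
    induction hg using Submonoid.closure_induction with
    | mem s hs => exact hα s hs
    | one => simp [map_one]
    | mul a b _ _ ha hb => rw [map_mul, ContinuousLinearMap.mul_apply, hb, ha]
  -- T is injective
  have hker : ∀ α : M, T α = 0 → α = 0 := by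
    intro α hα
    have hfix : ∀ g : G, ρ g α = α := by
      apply hinv
      intro s hs
      have h := congrFun hα ⟨s, hs⟩
      rw [hTapp] at h
      exact sub_eq_zero.mp h
    have hconst : ∀ x : G, j α x = j α 1 := by
      intro x
      have h := hequiv x α x
      rwa [hfix x, inv_mul_cancel] at h
    have hzero : ‖j α 1‖ ^ (p:ℝ) = 0 := by
      by_contra h0
      have hpos : 0 < ‖j α 1‖ ^ (p:ℝ) :=
        lt_of_le_of_ne (Real.rpow_nonneg (norm_nonneg _) _) (Ne.symm h0)
      have : Summable (fun _ : G => ‖j α 1‖ ^ (p:ℝ)) :=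
        (hmem α).congr (fun x => by rw [hconst x])
      exact (not_finite_iff_infinite.mpr ‹Infinite G›) (Finite.of_summable_const hpos this)
    have h1 : j α 1 = 0 := by
      have hpne : (p:ℝ) ≠ 0 := by
        have : (0:ℝ) < (p:ℝ) := by exact_mod_cast lt_of_lt_of_le two_pos hp
        exact this.ne'
      have := (Real.rpow_eq_zero_iff_of_nonneg (norm_nonneg _)).mp hzero
      exact norm_eq_zero.mp this.1
    apply hj
    rw [map_zero]
    funext x
    rw [hconst x, h1]
    rfl
  -- the range of T is closed (using closedness of the coboundaries)
  have hseq : IsSeqClosed (Set.range T) := by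
    intro y l hy hl
    choose α hα using hy
    have hlim : ∀ g : G, ∃ L : M, Tendsto (fun k => ρ g (α k) - α k) atTop (nhds L) := by
      intro g
      have hg : g ∈ Submonoid.closure (S : Set G) := hS ▸ Submonoid.mem_top g
      induction hg using Submonoid.closure_induction with
      | mem s hs =>
        refine ⟨l ⟨s, hs⟩, ?_⟩
        have h1 : Tendsto (fun k => y k ⟨s, hs⟩) atTop (nhds (l ⟨s, hs⟩)) :=
          tendsto_pi_nhds.mp hl ⟨s, hs⟩
        refine h1.congr (fun k => ?_)
        rw [← hα k, hTapp]
      | one => exact ⟨0, by simp [map_one, ContinuousLinearMap.one_apply]⟩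
      | mul a b _ _ ha hb =>
        obtain ⟨La, hLa⟩ := ha
        obtain ⟨Lb, hLb⟩ := hb
        refine ⟨ρ a Lb + La, ?_⟩
        have heq : (fun k => ρ (a * b) (α k) - α k)
            = fun k => ρ a (ρ b (α k) - α k) + (ρ a (α k) - α k) := by
          funext k
          rw [map_mul, ContinuousLinearMap.mul_apply, map_sub]
          abel
        rw [heq]
        exact (((ρ a).continuous.tendsto Lb).comp hLb).add hLa
    choose f hf using hlim
    have htend : Tendsto (fun k => fun g : G => ρ g (α k) - α k) atTop (nhds f) :=
      tendsto_pi_nhds.mpr hf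
    have hfB : f ∈ {f : G → M | ∃ α : M, ∀ g : G, f g = ρ g α - α} :=
      hB.mem_of_tendsto htend (Filter.Eventually.of_forall (fun k => ⟨α k, fun g => rfl⟩))
    obtain ⟨α₀, hα₀⟩ := hfB
    refine ⟨α₀, ?_⟩
    funext s
    have h1 : Tendsto (fun k => y k s) atTop (nhds (l s)) := tendsto_pi_nhds.mp hl s
    have h2 : Tendsto (fun k => y k s) atTop (nhds (f (s : G))) := by
      refine (hf (s : G)).congr (fun k => ?_)
      rw [← hα k, hTapp]
    rw [hTapp, ← hα₀, tendsto_nhds_unique h1 h2]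
  have hclosed : IsClosed (Set.range T) := hseq.isClosed
  -- range T as a complete submodule
  have hclosed' : IsClosed ((LinearMap.range (T : M →ₗ[ℂ] ({x // x ∈ S} → M)) : Submodule ℂ ({x // x ∈ S} → M)) : Set ({x // x ∈ S} → M)) := by
    have : ((LinearMap.range (T : M →ₗ[ℂ] ({x // x ∈ S} → M)) : Submodule ℂ ({x // x ∈ S} → M)) : Set ({x // x ∈ S} → M)) = Set.range T := by
      ext z; simp [LinearMap.mem_range]
    rwa [this]
  have : CompleteSpace (LinearMap.range (T : M →ₗ[ℂ] ({x // x ∈ S} → M)) : Submodule ℂ _) := hclosed'.completeSpace_coe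
  set T' : M →L[ℂ] (LinearMap.range (T : M →ₗ[ℂ] ({x // x ∈ S} → M)) : Submodule ℂ _) :=
    T.codRestrict (LinearMap.range (T : M →ₗ[ℂ] ({x // x ∈ S} → M))) (fun x => LinearMap.mem_range_self _ x) with hT'
  have hker' : LinearMap.ker (T' : M →ₗ[ℂ] (LinearMap.range (T : M →ₗ[ℂ] ({x // x ∈ S} → M)) : Submodule ℂ _)) = ⊥ := by
    rw [ContinuousLinearMap.ker_codRestrict]
    exact LinearMap.ker_eq_bot'.mpr (fun m hm => hker m hm)
  have hsurj' : LinearMap.range (T' : M →ₗ[ℂ] (LinearMap.range (T : M →ₗ[ℂ] ({x // x ∈ S} → M)) : Submodule ℂ _)) = ⊤ := by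
    rw [LinearMap.range_eq_top]
    rintro ⟨z, hz⟩
    obtain ⟨x, hx⟩ := LinearMap.mem_range.mp hz
    exact ⟨x, Subtype.ext hx⟩
  set e := ContinuousLinearEquiv.ofBijective T' hker' hsurj' with he
  -- T β n → 0
  have hT0 : Tendsto (fun n => T (β n)) atTop (nhds 0) := by
    refine tendsto_pi_nhds.mpr (fun s => ?_)
    have h := hβ2 (s : G)
    have := tendsto_zero_iff_norm_tendsto_zero.mpr h
    simpa [hTapp] using this
  have hT0' : Tendsto (fun n => T' (β n)) atTop (nhds 0) := by
    rw [Topology.IsEmbedding.subtypeVal.tendsto_nhds_iff]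
    exact hT0
  have hβ0 : Tendsto β atTop (nhds 0) := by
    have h := (e.symm.continuous.tendsto 0).comp hT0'
    have heq : (fun n => e.symm (T' (β n))) = β := by
      funext n
      exact ContinuousLinearEquiv.ofBijective_symm_apply_apply T' hker' hsurj' (β n)
    rw [map_zero] at h
    exact heq ▸ h
  have h1 : Tendsto (fun n => ‖β n‖) atTop (nhds 0) := by
    simpa using hβ0.norm
  have h2 : Tendsto (fun n : ℕ => ‖β n‖) atTop (nhds 1) := by
    simp only [hβ1]
    exact tendsto_const_nhds
  exact one_ne_zero (tendsto_nhds_unique h2 h1)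
end

section
/- Let G be a group satisfying the strong F\o lner condition, S_n an increasing enumeration of finite subsets with union G, and X_n finite subsets with |X_n| > (n N_n)^p and |X_n \setminus g X_n| < N_n for all g \in S_n (where N_n witnesses the strong F\o lner condition for S_n). Let \beta_n = (\sum_{x\in X_n} x)/||\sum_{x\in X_n} x||_M. Then for each fixed g \in G, ||g\beta_n - \beta_n||_M \leq 2/n for all sufficiently large n, provided ||\alpha||_1 \geq ||\alpha||_M \geq ||\alpha||_p on \mathbb{C}G. -/
open Filter MonoidAlgebra

lemma aux_apply {G : Type*} [Group G] [DecidableEq G] (X : Finset G) (y : G) :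
    (∑ x ∈ X, MonoidAlgebra.of ℂ G x).coeff y = if y ∈ X then 1 else 0 := by
  classical
  rw [show ((∑ x ∈ X, MonoidAlgebra.of ℂ G x).coeff y) = ∑ x ∈ X, (MonoidAlgebra.of ℂ G x).coeff y by
    rw [MonoidAlgebra.coeff_sum]; exact Finset.sum_apply' y]
  simp [MonoidAlgebra.of_apply, Finsupp.single_apply]

lemma aux_support {G : Type*} [Group G] [DecidableEq G] (X : Finset G) :
    (∑ x ∈ X, MonoidAlgebra.of ℂ G x).coeff.support = X := by
  ext y
  rw [Finsupp.mem_support_iff, aux_apply]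
  by_cases h : y ∈ X <;> simp [h]

lemma aux_lp {G : Type*} [Group G] [DecidableEq G] (p : ℕ) (X : Finset G) :
    lpNorm p (∑ x ∈ X, MonoidAlgebra.of ℂ G x) = (X.card : ℝ) ^ ((p : ℝ)⁻¹) := by
  unfold lpNorm
  rw [aux_support]
  congr 1
  have h : ∀ x ∈ X, ‖(∑ x ∈ X, MonoidAlgebra.of ℂ G x).coeff x‖ ^ (p:ℝ) = 1 := by
    intro x hx; rw [aux_apply]; simp [hx]
  rw [Finset.sum_congr rfl h, Finset.sum_const, nsmul_eq_mul, mul_one]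

lemma aux_shift_apply {G : Type*} [Group G] [DecidableEq G] (g : G) (X : Finset G) (y : G) :
    (MonoidAlgebra.of ℂ G g * ∑ x ∈ X, MonoidAlgebra.of ℂ G x).coeff y
      = if y ∈ X.image (fun x => g * x) then 1 else 0 := by
  rw [show (MonoidAlgebra.of ℂ G g * ∑ x ∈ X, MonoidAlgebra.of ℂ G x).coeff y
      = (∑ x ∈ X, MonoidAlgebra.of ℂ G x).coeff (g⁻¹ * y) by
    simp [MonoidAlgebra.of_apply, MonoidAlgebra.coeff_single_mul_apply], aux_apply]
  congr 1
  simp only [Finset.mem_image, eq_iff_iff]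
  constructor
  · intro h; exact ⟨g⁻¹ * y, h, by group⟩
  · rintro ⟨x, hx, rfl⟩; simpa using hx

lemma aux_l1 {G : Type*} [Group G] [DecidableEq G] (g : G) (X : Finset G) :
    l1Norm (MonoidAlgebra.of ℂ G g * (∑ x ∈ X, MonoidAlgebra.of ℂ G x)
        - ∑ x ∈ X, MonoidAlgebra.of ℂ G x)
      ≤ 2 * ((X \ X.image (fun x => g * x)).card : ℝ) := by
  classical
  set gX := X.image (fun x => g * x) with hgX
  set δ := MonoidAlgebra.of ℂ G g * (∑ x ∈ X, MonoidAlgebra.of ℂ G x)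
      - ∑ x ∈ X, MonoidAlgebra.of ℂ G x with hδ
  have happ : ∀ y, δ.coeff y = (if y ∈ gX then (1:ℂ) else 0) - (if y ∈ X then 1 else 0) := by
    intro y
    rw [hδ, MonoidAlgebra.coeff_sub, Finsupp.sub_apply, aux_shift_apply, aux_apply]
  have hsupp : δ.coeff.support ⊆ (gX \ X) ∪ (X \ gX) := by
    intro y hy
    rw [Finsupp.mem_support_iff] at hy
    by_contra hT
    simp only [Finset.mem_union, Finset.mem_sdiff, not_or, not_and, not_not] at hT
    apply hy
    rw [happ]
    by_cases h1 : y ∈ gX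
    · simp [h1, hT.1 h1]
    · have h2 : y ∉ X := fun h => h1 (hT.2 h)
      simp [h1, h2]
  have hval : ∀ y, ‖δ.coeff y‖ ≤ 1 := by
    intro y
    rw [happ]
    by_cases h1 : y ∈ gX <;> by_cases h2 : y ∈ X <;> simp [h1, h2]
  have h1 : l1Norm δ ≤ (((gX \ X) ∪ (X \ gX)).card : ℝ) := by
    unfold l1Norm
    calc ∑ x ∈ δ.coeff.support, ‖δ.coeff x‖ ≤ ∑ x ∈ (gX \ X) ∪ (X \ gX), ‖δ.coeff x‖ :=
          Finset.sum_le_sum_of_subset_of_nonneg hsupp (fun _ _ _ => norm_nonneg _)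
      _ ≤ ∑ _x ∈ (gX \ X) ∪ (X \ gX), (1:ℝ) := Finset.sum_le_sum (fun x _ => hval x)
      _ = _ := by simp
  have hcardeq : (gX \ X).card = (X \ gX).card := by
    have h1 : (gX \ X).card + (gX ∩ X).card = gX.card := Finset.card_sdiff_add_card_inter gX X
    have h2 : (X \ gX).card + (X ∩ gX).card = X.card := Finset.card_sdiff_add_card_inter X gX
    have h3 : gX.card = X.card := Finset.card_image_of_injective X (mul_right_injective g)
    have h4 : (gX ∩ X).card = (X ∩ gX).card := by rw [Finset.inter_comm]
    omega
  calc l1Norm δ ≤ (((gX \ X) ∪ (X \ gX)).card : ℝ) := h1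
    _ ≤ ((gX \ X).card + (X \ gX).card : ℕ) := by exact_mod_cast Nat.cast_le.mpr (Finset.card_union_le _ _)
    _ = 2 * ((X \ gX).card : ℝ) := by rw [hcardeq]; push_cast; ring

/-- Let `G` satisfy the strong Følner condition with witnesses: `S n` an increasing family
of finite sets with union `G`, `N n ∈ ℕ`, and `X n` finite with `|X n| > (n·N n)^p` and
`|X n \ g X n| < N n` for all `g ∈ S n`.  Let `β n = (∑_{x ∈ X n} x)/‖∑_{x ∈ X n} x‖_M`.
If `‖α‖₁ ≥ ‖α‖_M ≥ ‖α‖ₚ` on `ℂG`, then for each fixed `g ∈ G` we have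
`‖gβ_n - β_n‖_M ≤ 2/n` for all sufficiently large `n`. -/
theorem stmt9 {G : Type*} [Group G] [Infinite G] [Group.FG G] [DecidableEq G]
    {M : Type*} [NormedAddCommGroup M] [NormedSpace ℂ M] [CompleteSpace M]
    (ρ : G →* (M →L[ℂ] M))
    (p : ℕ) (hp : 2 ≤ p)
    (ι : MonoidAlgebra ℂ G →ₗ[ℂ] M) (hι : Function.Injective ι)
    (hequivι : ∀ (g : G) (c : MonoidAlgebra ℂ G), ι (of ℂ G g * c) = ρ g (ι c))
    (hnorm : ∀ c : MonoidAlgebra ℂ G, ‖ι c‖ ≤ l1Norm c ∧ lpNorm p c ≤ ‖ι c‖)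
    (S : ℕ → Finset G) (hmono : Monotone S) (hunion : ∀ g : G, ∃ n, g ∈ S n)
    (N : ℕ → ℕ) (X : ℕ → Finset G)
    (hcard : ∀ n, (X n).card > (n * N n) ^ p)
    (hfol : ∀ n, ∀ g ∈ S n, ((X n) \ (X n).image (fun x => g * x)).card < N n)
    (β : ℕ → M)
    (hβ : ∀ n, β n = ‖ι (∑ x ∈ X n, of ℂ G x)‖⁻¹ • ι (∑ x ∈ X n, of ℂ G x)) :
    ∀ g : G, ∀ᶠ n in atTop, ‖ρ g (β n) - β n‖ ≤ 2 / n := by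
  intro g
  obtain ⟨n₀, hn₀⟩ := hunion g
  rw [eventually_atTop]
  refine ⟨max n₀ 1, fun n hn => ?_⟩
  have hgS : g ∈ S n := hmono (le_trans (le_max_left _ _) hn) hn₀
  have hn1 : 1 ≤ n := le_trans (le_max_right _ _) hn
  have hN : 1 ≤ N n := Nat.one_le_iff_ne_zero.mpr (fun h => by
    have := hfol n g hgS; omega)
  set α := ∑ x ∈ X n, MonoidAlgebra.of ℂ G x with hα
  set c := ‖ι α‖ with hc
  have hp0 : (p : ℝ) ≠ 0 := by positivity
  -- c > n * N n
  have hclarge : (n * N n : ℝ) < c := by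
    have h1 : lpNorm p α ≤ c := (hnorm α).2
    have h2 : lpNorm p α = ((X n).card : ℝ) ^ ((p:ℝ)⁻¹) := aux_lp p (X n)
    have h3 : ((n * N n : ℕ) : ℝ) ^ (p : ℕ) < ((X n).card : ℝ) := by
      exact_mod_cast hcard n
    have h4 : ((n * N n : ℕ) : ℝ) < ((X n).card : ℝ) ^ ((p:ℝ)⁻¹) := by
      have hb : (0:ℝ) ≤ ((n*N n : ℕ):ℝ) ^ (p:ℕ) := by positivity
      have := Real.rpow_lt_rpow hb h3 (by positivity : (0:ℝ) < (p:ℝ)⁻¹)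
      rwa [← Real.rpow_natCast ((n*N n : ℕ):ℝ) p, ← Real.rpow_mul (by positivity),
        mul_inv_cancel₀ hp0, Real.rpow_one] at this
    push_cast at h4 ⊢
    linarith [h2 ▸ h1]
  have hnN1 : (1:ℝ) ≤ (n : ℝ) * (N n : ℝ) := by
    have : (1:ℕ) ≤ n * N n := Nat.one_le_iff_ne_zero.mpr (by positivity)
    exact_mod_cast this
  have hcpos : 0 < c := lt_of_lt_of_le (by linarith) hclarge.le
  -- rewrite the difference
  have hdiff : ρ g (β n) - β n = c⁻¹ • ι (MonoidAlgebra.of ℂ G g * α - α) := by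
    have hsm : ρ g (c⁻¹ • ι α) = c⁻¹ • ρ g (ι α) := (ρ g).map_smul_of_tower c⁻¹ (ι α)
    rw [hβ n, ← hα, ← hc, hsm, ← smul_sub, ← hequivι, ← map_sub]
  have hl1 : ‖ι (MonoidAlgebra.of ℂ G g * α - α)‖ ≤ 2 * (N n : ℝ) := by
    calc ‖ι (MonoidAlgebra.of ℂ G g * α - α)‖
        ≤ l1Norm (MonoidAlgebra.of ℂ G g * α - α) := (hnorm _).1
      _ ≤ 2 * (((X n) \ (X n).image (fun x => g * x)).card : ℝ) := aux_l1 g (X n)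
      _ ≤ 2 * (N n : ℝ) := by
          have := hfol n g hgS
          have : (((X n) \ (X n).image (fun x => g * x)).card : ℝ) ≤ (N n : ℝ) := by
            exact_mod_cast this.le
          linarith
  rw [hdiff, norm_smul, norm_inv, Real.norm_eq_abs, abs_of_pos hcpos]
  have hNpos : (0:ℝ) < (N n : ℝ) := by exact_mod_cast hN
  have hnpos : (0:ℝ) < (n : ℝ) := by exact_mod_cast hn1
  have hinv : c⁻¹ ≤ ((n:ℝ) * (N n : ℝ))⁻¹ := by
    apply inv_anti₀ (by linarith) hclarge.le
  calc c⁻¹ * ‖ι (MonoidAlgebra.of ℂ G g * α - α)‖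
      ≤ ((n:ℝ) * (N n : ℝ))⁻¹ * (2 * (N n : ℝ)) := by
        apply mul_le_mul hinv hl1 (norm_nonneg _) (by positivity)
    _ = 2 / n := by field_simp
end

section
/- For every n \geq 1 there exists a sequence (f_i) of continuous functions on \mathbb{T}^n with sup-norm 1 such that for every (m_1,...,m_n) \in \mathbb{Z}^n, the sup-norm of (z_1^{m_1}\cdots z_n^{m_n} - 1) f_i(z_1,...,z_n) tends to 0 as i \to \infty. Consequently, H^1(\mathbb{Z}^n, C^*_{red}(\mathbb{Z}^n)) is not Hausdorff. -/
open Filter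

noncomputable def dd {n : ℕ} (z : Fin n → Circle) : ℝ := ∑ k, ‖(z k : ℂ) - 1‖

lemma dd_nonneg {n : ℕ} (z : Fin n → Circle) : 0 ≤ dd z :=
  Finset.sum_nonneg fun _ _ => norm_nonneg _

lemma dd_cont {n : ℕ} : Continuous (dd (n := n)) := by
  unfold dd
  exact continuous_finset_sum _ fun k _ =>
    ((continuous_subtype_val.comp (continuous_apply k)).sub continuous_const).norm

lemma term_le_dd {n : ℕ} (z : Fin n → Circle) (k : Fin n) : ‖(z k : ℂ) - 1‖ ≤ dd z :=
  Finset.single_le_sum (f := fun k => ‖(z k : ℂ) - 1‖) (fun _ _ => norm_nonneg _)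
    (Finset.mem_univ k)

lemma norm_circle (u : Circle) : ‖(u : ℂ)‖ = 1 := by
  exact Circle.norm_coe u

lemma pow_sub_one_nat (u : Circle) (k : ℕ) : ‖(u : ℂ) ^ k - 1‖ ≤ k * ‖(u : ℂ) - 1‖ := by
  induction k with
  | zero => simp
  | succ k ih =>
    have h1 : (u:ℂ)^(k+1) - 1 = (u:ℂ)^k * ((u:ℂ) - 1) + ((u:ℂ)^k - 1) := by ring
    calc ‖(u:ℂ)^(k+1) - 1‖ ≤ ‖(u:ℂ)^k * ((u:ℂ) - 1)‖ + ‖(u:ℂ)^k - 1‖ := by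
          rw [h1]; exact norm_add_le _ _
      _ ≤ ‖(u:ℂ) - 1‖ + k * ‖(u:ℂ) - 1‖ := by
          rw [norm_mul, norm_pow, norm_circle, one_pow, one_mul]
          exact add_le_add le_rfl ih
      _ = (k+1 : ℕ) * ‖(u:ℂ) - 1‖ := by push_cast; ring

lemma pow_sub_one_int (u : Circle) (m : ℤ) :
    ‖(u : ℂ) ^ m - 1‖ ≤ |(m : ℝ)| * ‖(u : ℂ) - 1‖ := by
  rcases le_or_gt 0 m with h | h
  · obtain ⟨k, rfl⟩ := Int.eq_ofNat_of_zero_le h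
    rw [zpow_natCast]
    simpa using pow_sub_one_nat u k
  · obtain ⟨k, rfl⟩ : ∃ k : ℕ, m = -(k : ℤ) := ⟨m.natAbs, by omega⟩
    have hne : (u:ℂ)^(k:ℕ) ≠ 0 := pow_ne_zero _ (Circle.coe_ne_zero u)
    have h1 : (u:ℂ)^(-(k:ℤ)) - 1 = ((u:ℂ)^(k:ℕ))⁻¹ * (1 - (u:ℂ)^(k:ℕ)) := by
      rw [zpow_neg, zpow_natCast]
      field_simp
    rw [h1, norm_mul, norm_inv, norm_pow, norm_circle, one_pow, inv_one, one_mul,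
      ← neg_sub, norm_neg]
    simpa using pow_sub_one_nat u k

lemma prod_sub_one_le {n : ℕ} (z : Fin n → Circle) (m : Fin n → ℤ) :
    ‖(∏ k, (z k : ℂ) ^ (m k)) - 1‖ ≤ (∑ k, |(m k : ℝ)|) * dd z := by
  have key : ∀ s : Finset (Fin n),
      ‖(∏ k ∈ s, (z k : ℂ) ^ (m k)) - 1‖ ≤ ∑ k ∈ s, |(m k : ℝ)| * ‖(z k : ℂ) - 1‖ := by
    intro s
    induction s using Finset.induction with
    | empty => simp
    | @insert a s ha ih =>
      rw [Finset.prod_insert ha, Finset.sum_insert ha]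
      have hP : ‖∏ k ∈ s, (z k : ℂ) ^ (m k)‖ = 1 := by
        rw [norm_prod]
        exact Finset.prod_eq_one fun k _ => by rw [norm_zpow, norm_circle, one_zpow]
      have h1 : (z a:ℂ)^(m a) * ∏ k ∈ s, (z k:ℂ)^(m k) - 1 =
          ((z a:ℂ)^(m a) - 1) * ∏ k ∈ s, (z k:ℂ)^(m k) + ((∏ k ∈ s, (z k:ℂ)^(m k)) - 1) := by
        ring
      calc ‖(z a:ℂ)^(m a) * ∏ k ∈ s, (z k:ℂ)^(m k) - 1‖
          ≤ ‖((z a:ℂ)^(m a) - 1) * ∏ k ∈ s, (z k:ℂ)^(m k)‖ +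
            ‖(∏ k ∈ s, (z k:ℂ)^(m k)) - 1‖ := by rw [h1]; exact norm_add_le _ _
        _ ≤ |(m a : ℝ)| * ‖(z a : ℂ) - 1‖ + ∑ k ∈ s, |(m k : ℝ)| * ‖(z k : ℂ) - 1‖ := by
            rw [norm_mul, hP, mul_one]
            have hz := pow_sub_one_int (z a) (m a)
            exact add_le_add hz ih
  calc ‖(∏ k, (z k : ℂ) ^ (m k)) - 1‖ ≤ ∑ k, |(m k : ℝ)| * ‖(z k : ℂ) - 1‖ := key _
    _ ≤ ∑ k, |(m k : ℝ)| * dd z :=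
        Finset.sum_le_sum fun k _ =>
          mul_le_mul_of_nonneg_left (term_le_dd z k) (abs_nonneg _)
    _ = (∑ k, |(m k : ℝ)|) * dd z := by rw [Finset.sum_mul]

lemma prod_eq_one_of_dd_eq_zero {n : ℕ} (z : Fin n → Circle) (hz : dd z = 0) (m : Fin n → ℤ) :
    (∏ k, (z k : ℂ) ^ (m k)) = 1 := by
  have h : ∀ k, (z k : ℂ) = 1 := by
    intro k
    have := (Finset.sum_eq_zero_iff_of_nonneg (fun _ _ => norm_nonneg _)).mp hz k
      (Finset.mem_univ k)
    exact sub_eq_zero.mp (norm_eq_zero.mp this)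
  exact Finset.prod_eq_one fun k _ => by rw [h k, one_zpow]

noncomputable def ff {n : ℕ} (i : ℕ) : C(Fin n → Circle, ℂ) :=
  ⟨fun z => ((max 0 (1 - i * dd z) : ℝ) : ℂ),
    Complex.continuous_ofReal.comp (continuous_const.max
      (continuous_const.sub (continuous_const.mul dd_cont)))⟩

lemma dd_ones {n : ℕ} : dd (fun _ : Fin n => (1 : Circle)) = 0 := by
  unfold dd; simp

lemma ff_norm {n : ℕ} (i : ℕ) : ‖(ff i : C(Fin n → Circle, ℂ))‖ = 1 := by
  apply le_antisymm
  · refine (ContinuousMap.norm_le _ zero_le_one).mpr fun z => ?_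
    show ‖((max 0 (1 - i * dd z) : ℝ) : ℂ)‖ ≤ 1
    rw [Complex.norm_real, Real.norm_of_nonneg (le_max_left _ _)]
    have : 0 ≤ (i : ℝ) * dd z := mul_nonneg (by positivity) (dd_nonneg z)
    apply max_le zero_le_one (by linarith)
  · have h := (ff (n := n) i).norm_coe_le_norm (fun _ => 1)
    have h2 : (ff (n := n) i) (fun _ => 1) = 1 := by
      show ((max 0 (1 - i * dd (fun _ : Fin n => (1:Circle))) : ℝ) : ℂ) = 1
      rw [dd_ones]; norm_num
    rw [h2, norm_one] at h
    exact h

lemma t_max_le (i : ℕ) (hi : 1 ≤ i) (t : ℝ) (ht : 0 ≤ t) :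
    t * max 0 (1 - i * t) ≤ 1 / i := by
  have hipos : (0:ℝ) < i := by exact_mod_cast hi
  rcases le_or_gt (1/(i:ℝ)) t with h | h
  · have : 1 - i * t ≤ 0 := by
      have : 1 ≤ i * t := by
        calc (1:ℝ) = i * (1/i) := by field_simp
          _ ≤ i * t := by exact mul_le_mul_of_nonneg_left h (le_of_lt hipos)
      linarith
    rw [max_eq_left this, mul_zero]
    positivity
  · have hm : max 0 (1 - i*t) ≤ 1 := by
      apply max_le zero_le_one
      nlinarith
    calc t * max 0 (1 - i*t) ≤ t * 1 :=
          mul_le_mul_of_nonneg_left hm ht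
      _ = t := mul_one t
      _ ≤ 1/i := le_of_lt h

lemma part1 {n : ℕ} (m : Fin n → ℤ) :
    Tendsto (fun i => ⨆ z : Fin n → Circle,
        ‖(∏ k, (z k : ℂ) ^ (m k)) * (ff i) z - (ff i) z‖) atTop (nhds 0) := by
  set C : ℝ := ∑ k, |(m k : ℝ)| with hC
  have hC0 : 0 ≤ C := Finset.sum_nonneg fun _ _ => abs_nonneg _
  apply squeeze_zero' (g := fun i : ℕ => C * (1/(i:ℝ)))
  · exact Eventually.of_forall fun i => Real.iSup_nonneg fun z => norm_nonneg _
  · filter_upwards [eventually_ge_atTop 1] with i hi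
    apply ciSup_le
    intro z
    have h1 : (∏ k, (z k : ℂ) ^ (m k)) * (ff i) z - (ff i) z =
        ((∏ k, (z k : ℂ) ^ (m k)) - 1) * (ff i) z := by ring
    rw [h1, norm_mul]
    have h2 : ‖(ff (n := n) i) z‖ = max 0 (1 - i * dd z) := by
      show ‖((max 0 (1 - i * dd z) : ℝ) : ℂ)‖ = _
      rw [Complex.norm_real, Real.norm_of_nonneg (le_max_left _ _)]
    rw [h2]
    calc ‖(∏ k, (z k : ℂ) ^ (m k)) - 1‖ * max 0 (1 - i * dd z)
        ≤ (C * dd z) * max 0 (1 - i * dd z) :=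
          mul_le_mul_of_nonneg_right (prod_sub_one_le z m) (le_max_left _ _)
      _ = C * (dd z * max 0 (1 - i * dd z)) := by ring
      _ ≤ C * (1/i) :=
          mul_le_mul_of_nonneg_left (t_max_le i hi (dd z) (dd_nonneg z)) hC0
  · have := tendsto_one_div_atTop_nhds_zero_nat (𝕜 := ℝ)
    simpa using this.const_mul C

lemma sqrt_inv_bound {n : ℕ} (z : Fin n → Circle) (m : Fin n → ℤ) :
    ‖((∏ k, (z k : ℂ) ^ (m k)) - 1) * ((Real.sqrt (dd z))⁻¹ : ℝ)‖ ≤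
      (∑ k, |(m k : ℝ)|) * Real.sqrt (dd z) := by
  set C : ℝ := ∑ k, |(m k : ℝ)|
  have hC0 : 0 ≤ C := Finset.sum_nonneg fun _ _ => abs_nonneg _
  have hd := dd_nonneg z
  rw [norm_mul, Complex.norm_real, Real.norm_of_nonneg (by positivity)]
  calc ‖(∏ k, (z k : ℂ) ^ (m k)) - 1‖ * (Real.sqrt (dd z))⁻¹
      ≤ (C * dd z) * (Real.sqrt (dd z))⁻¹ :=
        mul_le_mul_of_nonneg_right (prod_sub_one_le z m) (by positivity)
    _ = C * (dd z * (Real.sqrt (dd z))⁻¹) := by ring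
    _ ≤ C * Real.sqrt (dd z) := by
        apply mul_le_mul_of_nonneg_left _ hC0
        rcases eq_or_lt_of_le hd with h | h
        · rw [← h]; simp
        · have hs : 0 < Real.sqrt (dd z) := Real.sqrt_pos.mpr h
          rw [← div_eq_mul_inv, div_le_iff₀ hs]
          exact le_of_eq (Real.mul_self_sqrt hd).symm

noncomputable def bb {n : ℕ} (m : Fin n → ℤ) : C(Fin n → Circle, ℂ) :=
  ⟨fun z => ((∏ k, (z k : ℂ) ^ (m k)) - 1) * ((Real.sqrt (dd z))⁻¹ : ℝ), by
    rw [continuous_iff_continuousAt]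
    intro z₀
    have hchi : Continuous fun z : Fin n → Circle => (∏ k, (z k : ℂ) ^ (m k)) - 1 := by
      apply Continuous.sub _ continuous_const
      apply continuous_finset_prod
      intro k _
      exact Continuous.zpow₀ (continuous_subtype_val.comp (continuous_apply k)) (m k)
        (fun z => Or.inl (Circle.coe_ne_zero _))
    rcases eq_or_lt_of_le (dd_nonneg z₀) with h0 | h0
    · -- dd z₀ = 0 : squeeze
      have hval : ((∏ k, (z₀ k : ℂ) ^ (m k)) - 1) * ((Real.sqrt (dd z₀))⁻¹ : ℝ) = 0 := by
        rw [prod_eq_one_of_dd_eq_zero z₀ h0.symm m, sub_self, zero_mul]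
      show Tendsto (fun z => ((∏ k, (z k : ℂ) ^ (m k)) - 1) * ((Real.sqrt (dd z))⁻¹ : ℝ))
        (nhds z₀) (nhds (((∏ k, (z₀ k : ℂ) ^ (m k)) - 1) * ((Real.sqrt (dd z₀))⁻¹ : ℝ)))
      rw [hval]
      rw [tendsto_zero_iff_norm_tendsto_zero]
      apply squeeze_zero (fun z => norm_nonneg _) (fun z => sqrt_inv_bound z m)
      have : Tendsto (fun z : Fin n → Circle => (∑ k, |(m k : ℝ)|) * Real.sqrt (dd z))
          (nhds z₀) (nhds ((∑ k, |(m k : ℝ)|) * Real.sqrt (dd z₀))) :=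
        (Continuous.mul continuous_const (Real.continuous_sqrt.comp dd_cont)).tendsto z₀
      rwa [← h0, Real.sqrt_zero, mul_zero] at this
    · -- dd z₀ > 0
      apply ContinuousAt.mul hchi.continuousAt
      apply Complex.continuous_ofReal.continuousAt.comp
      apply ContinuousAt.inv₀
      · exact (Real.continuous_sqrt.comp dd_cont).continuousAt
      · exact ne_of_gt (Real.sqrt_pos.mpr h0)⟩

noncomputable def aa {n : ℕ} (j : ℕ) : C(Fin n → Circle, ℂ) :=
  ⟨fun z => ((Real.sqrt (max (dd z) (1/(j+1))))⁻¹ : ℝ), by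
    apply Complex.continuous_ofReal.comp
    apply Continuous.inv₀ (Real.continuous_sqrt.comp (dd_cont.max continuous_const))
    intro z
    apply ne_of_gt
    apply Real.sqrt_pos.mpr
    have : (0:ℝ) < 1/(j+1) := by positivity
    exact lt_of_lt_of_le this (le_max_right _ _)⟩

lemma chi_cont {n : ℕ} (m : Fin n → ℤ) :
    Continuous fun z : Fin n → Circle => ∏ k, (z k : ℂ) ^ (m k) := by
  apply continuous_finset_prod
  intro k _
  exact Continuous.zpow₀ (continuous_subtype_val.comp (continuous_apply k)) (m k)
    (fun z => Or.inl (Circle.coe_ne_zero _))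

noncomputable def bbj {n : ℕ} (j : ℕ) (m : Fin n → ℤ) : C(Fin n → Circle, ℂ) :=
  ⟨fun z => (∏ k, (z k : ℂ) ^ (m k)) * (aa j) z - (aa j) z,
    ((chi_cont m).mul (aa j).continuous).sub (aa j).continuous⟩

lemma approx_bound {n : ℕ} (m : Fin n → ℤ) (j : ℕ) (z : Fin n → Circle) :
    ‖bbj j m z - bb m z‖ ≤ (∑ k, |(m k : ℝ)|) * Real.sqrt (1/(j+1)) := by
  set C : ℝ := ∑ k, |(m k : ℝ)| with hCdef
  have hC0 : 0 ≤ C := Finset.sum_nonneg fun _ _ => abs_nonneg _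
  set ε : ℝ := 1/(j+1) with hε
  have hε0 : 0 < ε := by positivity
  have hd := dd_nonneg z
  have h1 : bbj j m z - bb m z = ((∏ k, (z k : ℂ) ^ (m k)) - 1) *
      (((Real.sqrt (max (dd z) ε))⁻¹ : ℝ) - ((Real.sqrt (dd z))⁻¹ : ℝ) : ℂ) := by
    show (∏ k, (z k : ℂ) ^ (m k)) * ((Real.sqrt (max (dd z) ε))⁻¹ : ℝ)
        - ((Real.sqrt (max (dd z) ε))⁻¹ : ℝ)
        - ((∏ k, (z k : ℂ) ^ (m k)) - 1) * ((Real.sqrt (dd z))⁻¹ : ℝ) = _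
    push_cast
    ring
  rw [h1, norm_mul]
  rcases le_or_gt ε (dd z) with h | h
  · rw [max_eq_left h]
    simp only [sub_self, Complex.ofReal_zero, norm_zero, mul_zero]
    positivity
  · rcases eq_or_lt_of_le hd with h0 | h0
    · rw [prod_eq_one_of_dd_eq_zero z h0.symm m, sub_self, norm_zero, zero_mul]
      positivity
    · have hs : 0 < Real.sqrt (dd z) := Real.sqrt_pos.mpr h0
      have hsm : 0 < Real.sqrt (max (dd z) ε) := Real.sqrt_pos.mpr (lt_max_of_lt_left h0)
      have hmono : Real.sqrt (dd z) ≤ Real.sqrt (max (dd z) ε) :=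
        Real.sqrt_le_sqrt (le_max_left _ _)
      have hinv : (Real.sqrt (max (dd z) ε))⁻¹ ≤ (Real.sqrt (dd z))⁻¹ :=
        inv_anti₀ hs hmono
      have hdiff : ‖(((Real.sqrt (max (dd z) ε))⁻¹ : ℝ) - ((Real.sqrt (dd z))⁻¹ : ℝ) : ℂ)‖
          ≤ (Real.sqrt (dd z))⁻¹ := by
        rw [← Complex.ofReal_sub, Complex.norm_real, Real.norm_eq_abs, abs_sub_comm,
          abs_of_nonneg (by linarith)]
        have : 0 ≤ (Real.sqrt (max (dd z) ε))⁻¹ := by positivity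
        linarith
      calc ‖(∏ k, (z k : ℂ) ^ (m k)) - 1‖ *
            ‖(((Real.sqrt (max (dd z) ε))⁻¹ : ℝ) - ((Real.sqrt (dd z))⁻¹ : ℝ) : ℂ)‖
          ≤ (C * dd z) * (Real.sqrt (dd z))⁻¹ :=
            mul_le_mul (prod_sub_one_le z m) hdiff (norm_nonneg _)
              (mul_nonneg hC0 hd)
        _ = C * (dd z * (Real.sqrt (dd z))⁻¹) := by ring
        _ ≤ C * Real.sqrt (dd z) := by
            apply mul_le_mul_of_nonneg_left _ hC0
            rw [← div_eq_mul_inv, div_le_iff₀ hs]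
            exact le_of_eq (Real.mul_self_sqrt hd).symm
        _ ≤ C * Real.sqrt ε :=
            mul_le_mul_of_nonneg_left (Real.sqrt_le_sqrt (le_of_lt h)) hC0

lemma bbj_tendsto {n : ℕ} :
    Tendsto (fun j => (bbj (n := n) j : (Fin n → ℤ) → C(Fin n → Circle, ℂ))) atTop
      (nhds (bb (n := n))) := by
  rw [tendsto_pi_nhds]
  intro m
  rw [tendsto_iff_norm_sub_tendsto_zero]
  set C : ℝ := ∑ k, |(m k : ℝ)| with hCdef
  have hC0 : 0 ≤ C := Finset.sum_nonneg fun _ _ => abs_nonneg _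
  apply squeeze_zero (fun j => norm_nonneg _)
    (g := fun j : ℕ => C * Real.sqrt (1/((j:ℝ)+1)))
  · intro j
    apply (ContinuousMap.norm_le _ (by positivity)).mpr
    intro z
    exact approx_bound m j z
  · have h1 : Tendsto (fun j : ℕ => Real.sqrt (1/((j:ℝ)+1))) atTop (nhds 0) := by
      have h2 := (Real.continuous_sqrt.tendsto 0).comp tendsto_one_div_add_atTop_nhds_zero_nat
      rw [Real.sqrt_zero] at h2
      exact h2
    simpa using h1.const_mul C

lemma exp_ne_one_of_small {t : ℝ} (ht0 : 0 < t) (ht1 : t ≤ 1) : (Circle.exp t : ℂ) ≠ 1 := by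
  intro h
  have h1 : Circle.exp t = 1 := Circle.coe_eq_one.mp h
  rw [Circle.exp_eq_one] at h1
  obtain ⟨N, hN⟩ := h1
  have hπ := Real.pi_gt_three
  rcases le_or_gt N 0 with hle | hlt
  · have : (N : ℝ) ≤ 0 := by exact_mod_cast hle
    nlinarith
  · have : (1 : ℝ) ≤ (N : ℝ) := by exact_mod_cast hlt
    nlinarith

lemma not_coboundary {n : ℕ} (hn : 1 ≤ n) (α : C(Fin n → Circle, ℂ))
    (hα : ∀ (m : Fin n → ℤ) (z : Fin n → Circle),
      bb m z = (∏ k, (z k : ℂ) ^ (m k)) * α z - α z) : False := by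
  set i0 : Fin n := ⟨0, hn⟩ with hi0
  set e0 : Fin n → ℤ := fun k => if k = i0 then 1 else 0 with he0
  set M : ℝ := ‖α‖ with hM
  have hM0 : 0 ≤ M := norm_nonneg _
  have key : ∀ t : ℝ, 0 < t → t ≤ 1 →
      (Real.sqrt ‖(Circle.exp t : ℂ) - 1‖)⁻¹ ≤ M ∧
      ‖(Circle.exp t : ℂ) - 1‖ ≤ 2 * t ∧ 0 < ‖(Circle.exp t : ℂ) - 1‖ := by
    intro t ht0 ht1
    set zt : Fin n → Circle := fun k => if k = i0 then Circle.exp t else 1 with hzt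
    have hne : (Circle.exp t : ℂ) ≠ 1 := exp_ne_one_of_small ht0 ht1
    have hchi : (∏ k, (zt k : ℂ) ^ (e0 k)) = (Circle.exp t : ℂ) := by
      calc (∏ k, (zt k : ℂ) ^ (e0 k))
          = ∏ k, (if k = i0 then (Circle.exp t : ℂ) else 1) := by
            apply Finset.prod_congr rfl
            intro k _
            by_cases h : k = i0 <;> simp [he0, hzt, h]
        _ = (Circle.exp t : ℂ) := by
            rw [Finset.prod_ite_eq' Finset.univ i0 (fun _ => (Circle.exp t : ℂ))]
            simp
    have hdd : dd zt = ‖(Circle.exp t : ℂ) - 1‖ := by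
      unfold dd
      calc (∑ k, ‖(zt k : ℂ) - 1‖)
          = ∑ k, (if k = i0 then ‖(Circle.exp t : ℂ) - 1‖ else 0) := by
            apply Finset.sum_congr rfl
            intro k _
            by_cases h : k = i0 <;> simp [hzt, h]
        _ = ‖(Circle.exp t : ℂ) - 1‖ := by
            rw [Finset.sum_ite_eq' Finset.univ i0 (fun _ => ‖(Circle.exp t : ℂ) - 1‖)]
            simp
    have hD0 : 0 < ‖(Circle.exp t : ℂ) - 1‖ :=
      norm_pos_iff.mpr (sub_ne_zero.mpr hne)
    refine ⟨?_, ?_, hD0⟩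
    · -- the value of α at zt
      have heq := hα e0 zt
      have hb : bb e0 zt = ((Circle.exp t : ℂ) - 1) *
          ((Real.sqrt ‖(Circle.exp t : ℂ) - 1‖)⁻¹ : ℝ) := by
        show ((∏ k, (zt k : ℂ) ^ (e0 k)) - 1) * ((Real.sqrt (dd zt))⁻¹ : ℝ) = _
        rw [hchi, hdd]
      rw [hb, hchi] at heq
      have heq2 : ((Circle.exp t : ℂ) - 1) *
          ((Real.sqrt ‖(Circle.exp t : ℂ) - 1‖)⁻¹ : ℝ) =
          ((Circle.exp t : ℂ) - 1) * α zt := by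
        rw [heq]; ring
      have hcancel := mul_left_cancel₀ (sub_ne_zero.mpr hne) heq2
      have hle := α.norm_coe_le_norm zt
      rw [← hcancel] at hle
      rw [Complex.norm_real, Real.norm_eq_abs, abs_of_nonneg (by positivity)] at hle
      exact hle
    · -- ‖exp t - 1‖ ≤ 2t
      rw [Circle.coe_exp]
      have habs : ‖(t : ℂ) * Complex.I‖ ≤ 1 := by
        rw [norm_mul, Complex.norm_I, mul_one, Complex.norm_real, Real.norm_eq_abs, abs_of_pos ht0]
        exact ht1
      have := Complex.norm_exp_sub_one_le habs
      rwa [norm_mul, Complex.norm_I, mul_one, Complex.norm_real, Real.norm_eq_abs, abs_of_pos ht0] at this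
  -- now derive the contradiction
  obtain ⟨j, hj⟩ := exists_nat_gt (2 * M ^ 2)
  have hjpos : (0:ℝ) < (j:ℝ) + 1 := by positivity
  set t : ℝ := 1/((j:ℝ)+1) with ht
  have ht0 : 0 < t := by positivity
  have ht1 : t ≤ 1 := by
    rw [ht, div_le_one hjpos]; linarith
  obtain ⟨h1, h2, h3⟩ := key t ht0 ht1
  set D : ℝ := ‖(Circle.exp t : ℂ) - 1‖ with hD
  have hs : 0 < Real.sqrt D := Real.sqrt_pos.mpr h3
  have hsq : Real.sqrt D * Real.sqrt D = D := Real.mul_self_sqrt (le_of_lt h3)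
  have hone : 1 ≤ M * Real.sqrt D := by
    calc (1:ℝ) = Real.sqrt D * (Real.sqrt D)⁻¹ := by
          rw [mul_inv_cancel₀ (ne_of_gt hs)]
      _ ≤ Real.sqrt D * M := mul_le_mul_of_nonneg_left h1 (le_of_lt hs)
      _ = M * Real.sqrt D := mul_comm _ _
  have hsq2 : 1 ≤ M ^ 2 * D := by nlinarith
  have hD2 : D ≤ 2 * (1/((j:ℝ)+1)) := h2
  have h5 : 1 ≤ M ^ 2 * 2 / ((j:ℝ)+1) := by
    calc (1:ℝ) ≤ M ^ 2 * D := hsq2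
      _ ≤ M ^ 2 * (2 * (1/((j:ℝ)+1))) := mul_le_mul_of_nonneg_left hD2 (sq_nonneg M)
      _ = M ^ 2 * 2 / ((j:ℝ)+1) := by ring
  rw [le_div_iff₀ hjpos, one_mul] at h5
  linarith

/-- For every `n ≥ 1` there is a sequence `(f_i)` in `C(𝕋ⁿ)` of sup-norm `1` such that for
every `(m_1,…,m_n) ∈ ℤⁿ` the sup-norm of `(z_1^{m_1}⋯z_n^{m_n} - 1) f_i` tends to `0`.
Consequently `H¹(ℤⁿ, C*_red(ℤⁿ)) = H¹(ℤⁿ, C(𝕋ⁿ))` is not Hausdorff: the set of principal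
cocycles is not closed in the topology of pointwise convergence. -/
theorem stmt11 (n : ℕ) (hn : 1 ≤ n) :
    (∃ f : ℕ → C(Fin n → Circle, ℂ), (∀ i, ‖f i‖ = 1) ∧
      ∀ m : Fin n → ℤ,
        Tendsto (fun i => ⨆ z : Fin n → Circle,
            ‖(∏ k, (z k : ℂ) ^ (m k)) * f i z - f i z‖) atTop (nhds 0)) ∧
    ¬ IsClosed {b : (Fin n → ℤ) → C(Fin n → Circle, ℂ) |
        ∃ α : C(Fin n → Circle, ℂ), ∀ (m : Fin n → ℤ) (z : Fin n → Circle),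
          b m z = (∏ k, (z k : ℂ) ^ (m k)) * α z - α z} := by
  constructor
  · exact ⟨ff, ff_norm, part1⟩
  · intro hcl
    have hmem : (bb : (Fin n → ℤ) → C(Fin n → Circle, ℂ)) ∈
        {b : (Fin n → ℤ) → C(Fin n → Circle, ℂ) |
          ∃ α : C(Fin n → Circle, ℂ), ∀ (m : Fin n → ℤ) (z : Fin n → Circle),
            b m z = (∏ k, (z k : ℂ) ^ (m k)) * α z - α z} := by
      apply hcl.mem_of_tendsto bbj_tendsto
      apply Eventually.of_forall
      intro j
      exact ⟨aa j, fun m z => rfl⟩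
    obtain ⟨α, hα⟩ := hmem
    exact not_coboundary hn α hα
end

section
/- The quotient vector space C(\mathbb{T}) / (z-1)C(\mathbb{T}) is infinite-dimensional over \mathbb{C}. -/
/-- The function `z ↦ z - 1` as a continuous map on the circle. -/
noncomputable def zSubOne : C(Circle, ℂ) :=
  ⟨fun z => (z : ℂ) - 1, by fun_prop⟩

open Filter Topology

/-- The auxiliary family `z ↦ |z - 1|^s`. -/
noncomputable def fpow (s : ↥(Set.Ioo (0:ℝ) 1)) : C(Circle, ℂ) :=
  ⟨fun z => ((‖(z : ℂ) - 1‖) ^ (s : ℝ) : ℝ),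
    Complex.continuous_ofReal.comp <|
      ((continuous_norm.comp (by fun_prop)).rpow_const
        (fun x => Or.inr s.2.1.le))⟩

lemma fpow_apply (s : ↥(Set.Ioo (0:ℝ) 1)) (z : Circle) :
    fpow s z = ((‖(z : ℂ) - 1‖) ^ (s : ℝ) : ℝ) := rfl

/-- the sequence `exp(iπ/(n+1))` on the circle -/
noncomputable def useq (n : ℕ) : Circle := Circle.exp (Real.pi / (n + 1))

lemma useq_ne_one (n : ℕ) : useq n ≠ 1 := by
  have hden : (0:ℝ) < (n:ℝ) + 1 := by positivity
  have hpos : (0:ℝ) < Real.pi / (n + 1) := div_pos Real.pi_pos hden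
  have hle : Real.pi / (n + 1) ≤ Real.pi := by
    rw [div_le_iff₀ hden]
    nlinarith [Real.pi_pos, Nat.cast_nonneg (α := ℝ) n]
  intro h
  obtain ⟨k, hk⟩ := Circle.exp_eq_one.mp h
  rcases le_or_gt k 0 with hk0 | hk0
  · have : (k : ℝ) * (2 * Real.pi) ≤ 0 := by
      apply mul_nonpos_of_nonpos_of_nonneg
      · exact_mod_cast hk0
      · positivity
    linarith [hk ▸ hpos]
  · have hk1 : (1:ℝ) ≤ (k:ℝ) := by exact_mod_cast hk0
    have : 2 * Real.pi ≤ (k:ℝ) * (2 * Real.pi) := by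
      nlinarith [Real.pi_pos]
    have := hk ▸ this
    linarith [Real.pi_pos]

lemma useq_tendsto : Tendsto useq atTop (𝓝 1) := by
  have h1 : Tendsto (fun n : ℕ => Real.pi / (n + 1)) atTop (𝓝 0) := by
    apply Tendsto.div_atTop tendsto_const_nhds
    exact tendsto_atTop_add_const_right _ 1 tendsto_natCast_atTop_atTop
  have := (Circle.exp.continuous.tendsto 0).comp h1
  rw [Circle.exp_zero] at this
  exact this

/-- The key analytic lemma: if `(z-1) h = ∑ αᵢ |z-1|^{sᵢ}` with `s₀` minimal, then `α s₀ = 0`. -/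
lemma key (t : Finset ↥(Set.Ioo (0:ℝ) 1)) (α : ↥(Set.Ioo (0:ℝ) 1) → ℂ) (h : C(Circle, ℂ))
    (heq : zSubOne * h = ∑ i ∈ t, α i • fpow i)
    (i₀ : ↥(Set.Ioo (0:ℝ) 1)) (hi₀ : i₀ ∈ t) (hmin : ∀ i ∈ t, (i₀ : ℝ) ≤ (i : ℝ)) :
    α i₀ = 0 := by
  set r : ℕ → ℝ := fun n => ‖(useq n : ℂ) - 1‖ with hr_def
  have hrpos : ∀ n, 0 < r n := by
    intro n
    rw [hr_def]
    simp only []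
    rw [norm_pos_iff]
    intro hc
    apply useq_ne_one n
    ext
    exact sub_eq_zero.mp hc
  have hr0 : Tendsto r atTop (𝓝 0) := by
    have hcoe : Tendsto (fun n => ((useq n : ℂ))) atTop (𝓝 1) :=
      (continuous_subtype_val.tendsto _).comp useq_tendsto
    have : Tendsto (fun n => ‖(useq n : ℂ) - 1‖) atTop (𝓝 (‖(1:ℂ) - 1‖)) :=
      (continuous_norm.tendsto _).comp (hcoe.sub tendsto_const_nhds)
    simpa using this
  -- tendsto of r^c to 0 for c > 0
  have hrpow : ∀ c : ℝ, 0 < c → Tendsto (fun n => r n ^ c) atTop (𝓝 0) := by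
    intro c hc
    have hcont : ContinuousAt (fun x : ℝ => x ^ c) 0 :=
      Real.continuousAt_rpow_const 0 c (Or.inr hc.le)
    have := hcont.tendsto.comp hr0
    simpa [Real.zero_rpow hc.ne', Function.comp_def] using this
  -- evaluate the equation at useq n
  have heval : ∀ n, ((useq n : ℂ) - 1) * h (useq n)
      = ∑ i ∈ t, α i * ((r n ^ (i : ℝ) : ℝ) : ℂ) := by
    intro n
    have := congrFun (congrArg DFunLike.coe heq) (useq n)
    simpa [ContinuousMap.mul_apply, ContinuousMap.sum_apply, ContinuousMap.smul_apply,
      zSubOne, fpow_apply, smul_eq_mul, hr_def] using this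
  set A : ℕ → ℂ := fun n => ∑ i ∈ t, α i * ((r n ^ ((i : ℝ) - (i₀ : ℝ)) : ℝ) : ℂ) with hA_def
  -- first limit : A → α i₀
  have hlim1 : Tendsto A atTop (𝓝 (α i₀)) := by
    have : α i₀ = ∑ i ∈ t, (if i = i₀ then α i₀ else 0) := by
      rw [Finset.sum_ite_eq' t i₀ (fun _ => α i₀)]
      simp [hi₀]
    rw [this]
    apply tendsto_finset_sum
    intro i hi
    by_cases hii : i = i₀
    · subst hii
      simp only [if_pos rfl, sub_self, Real.rpow_zero, Complex.ofReal_one, mul_one]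
      exact tendsto_const_nhds
    · have hlt : (0:ℝ) < (i : ℝ) - (i₀ : ℝ) := by
        have hle := hmin i hi
        have hne : (i₀ : ℝ) ≠ (i : ℝ) := fun hcontra => hii (Subtype.ext hcontra.symm)
        have : (i₀ : ℝ) < (i : ℝ) := lt_of_le_of_ne hle hne
        linarith
      simp only [if_neg hii]
      have h1 : Tendsto (fun n => ((r n ^ ((i : ℝ) - (i₀ : ℝ)) : ℝ) : ℂ)) atTop (𝓝 0) := by
        have := (Complex.continuous_ofReal.tendsto _).comp (hrpow _ hlt)
        simpa [Function.comp_def] using this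
      have := h1.const_mul (α i)
      simpa using this
  -- second limit : A → 0
  have hAeq : ∀ n, A n = ((r n ^ (-(i₀ : ℝ)) : ℝ) : ℂ) * (((useq n : ℂ) - 1) * h (useq n)) := by
    intro n
    rw [heval n, Finset.mul_sum, hA_def]
    apply Finset.sum_congr rfl
    intro i _
    have : r n ^ ((i : ℝ) - (i₀ : ℝ)) = r n ^ (-(i₀ : ℝ)) * r n ^ (i : ℝ) := by
      rw [← Real.rpow_add (hrpos n)]
      ring_nf
    rw [this]
    push_cast
    ring
  have hlim2 : Tendsto A atTop (𝓝 0) := by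
    rw [tendsto_zero_iff_norm_tendsto_zero]
    have hnorm : ∀ n, ‖A n‖ = r n ^ (1 - (i₀ : ℝ)) * ‖h (useq n)‖ := by
      intro n
      rw [hAeq n, norm_mul, norm_mul]
      have h1 : ‖((r n ^ (-(i₀ : ℝ)) : ℝ) : ℂ)‖ = r n ^ (-(i₀ : ℝ)) := by
        rw [Complex.norm_real, Real.norm_eq_abs, abs_of_nonneg (Real.rpow_nonneg (hrpos n).le _)]
      have h2 : ‖(useq n : ℂ) - 1‖ = r n := rfl
      rw [h1, h2]
      have : r n ^ (-(i₀ : ℝ)) * r n = r n ^ (1 - (i₀ : ℝ)) := by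
        nth_rewrite 2 [show r n = r n ^ (1:ℝ) by rw [Real.rpow_one]]
        rw [← Real.rpow_add (hrpos n)]
        ring_nf
      rw [← mul_assoc, this]
    simp only [hnorm]
    have hpos : (0:ℝ) < 1 - (i₀ : ℝ) := by
      have := i₀.2.2
      linarith
    have hh : Tendsto (fun n => ‖h (useq n)‖) atTop (𝓝 ‖h 1‖) :=
      ((continuous_norm.comp h.continuous).tendsto _).comp useq_tendsto
    have := (hrpow _ hpos).mul hh
    simpa using this
  exact tendsto_nhds_unique hlim1 hlim2

lemma aux_zero (t : Finset ↥(Set.Ioo (0:ℝ) 1)) :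
    ∀ α : ↥(Set.Ioo (0:ℝ) 1) → ℂ,
      (∑ i ∈ t, α i • fpow i) ∈ LinearMap.range (LinearMap.mulLeft ℂ zSubOne) →
      ∀ i ∈ t, α i = 0 := by
  induction t using Finset.strongInduction with
  | _ t IH =>
    intro α hmem i hi
    obtain ⟨i₀, hi₀, hmin⟩ := t.exists_min_image (fun j => (j : ℝ)) ⟨i, hi⟩
    obtain ⟨h, hh⟩ := hmem
    rw [LinearMap.mulLeft_apply] at hh
    have hz : α i₀ = 0 := key t α h hh i₀ hi₀ hmin
    have hrest : (∑ j ∈ t.erase i₀, α j • fpow j) ∈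
        LinearMap.range (LinearMap.mulLeft ℂ zSubOne) := by
      rw [Finset.sum_erase_eq_sub hi₀, hz, zero_smul, sub_zero]
      exact ⟨h, by rw [LinearMap.mulLeft_apply]; exact hh⟩
    rcases eq_or_ne i i₀ with hii | hii
    · rw [hii]; exact hz
    · exact IH (t.erase i₀) (Finset.erase_ssubset hi₀) α hrest i
        (Finset.mem_erase.mpr ⟨hii, hi⟩)

/-- The quotient vector space `C(𝕋) / (z-1)C(𝕋)` is infinite-dimensional over `ℂ`. -/
theorem stmt17 :
    ¬ FiniteDimensional ℂ
      (C(Circle, ℂ) ⧸ LinearMap.range (LinearMap.mulLeft ℂ zSubOne)) := by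
  intro hfd
  set p := LinearMap.range (LinearMap.mulLeft ℂ zSubOne) with hp
  have hinf : Infinite ↥(Set.Ioo (0:ℝ) 1) :=
    Set.Ioo.infinite (by norm_num)
  have hli : LinearIndependent ℂ
      (fun s : ↥(Set.Ioo (0:ℝ) 1) => Submodule.Quotient.mk (p := p) (fpow s)) := by
    rw [linearIndependent_iff']
    intro t α hsum i hi
    have hmem : (∑ j ∈ t, α j • fpow j) ∈ p := by
      rw [← Submodule.Quotient.mk_eq_zero p]
      have : (Submodule.Quotient.mk (p := p) (∑ j ∈ t, α j • fpow j))
          = ∑ j ∈ t, α j • Submodule.Quotient.mk (p := p) (fpow j) := by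
        rw [← Submodule.mkQ_apply, map_sum]
        simp [Submodule.mkQ_apply]
      rw [this]
      exact hsum
    exact aux_zero t α hmem i hi
  exact Module.Finite.not_linearIndependent_of_infinite _ hli
end
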